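/- arXiv:2003.09364 — 9 statements merged into one kernel-verified Lean document; each statement's English description precedes it below -/
import Mathlib

section
/- Let F be a monotonic failure transducer and let C be the set of states lying on a failure cycle, i.e., C = {q ∈ Q | ∃ n ≥ 1, f^(n)(q) = q}. Then the failure transducer F' obtained from F by restricting f and φ to Q \ C represents the same function: O_{F'} = O_F. -/
open scoped NNReal Computability
open Classical

noncomputable section

/-- The free monoid structure on lists (concatenation). -/
instance listMonoid (Ω : Type) : Monoid (List Ω) where
  mul := (· ++ ·)
  one := []
  mul_assoc := List.append_assoc
  one_mul := fun _ => rfl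
  mul_one := List.append_nil

/-- A subsequential transducer.  `step q a = some (q', m)` encodes that both the
transition function `δ q a = q'` and the output function `λ q a = m` are defined
(they have equal domains).  `rho q = some r` encodes that `q` is final with final
output `r`. -/
structure Transducer (A Q M : Type) [Monoid M] where
  start : Q
  step : Q → A → Option (Q × M)
  init : M
  rho : Q → Option M

namespace Transducer

variable {A Q M : Type} [Monoid M]

def delta (T : Transducer A Q M) (q : Q) (a : A) : Option Q := (T.step q a).map Prod.fst

def lam (T : Transducer A Q M) (q : Q) (a : A) : Option M := (T.step q a).map Prod.snd

/-- Generalized (partial) transition function `δ*`. -/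
def dstar (T : Transducer A Q M) : Q → List A → Option Q
  | q, [] => some q
  | q, a :: w => (T.delta q a).bind fun q' => T.dstar q' w

/-- Generalized (partial) output function `λ*`. -/
def lstar (T : Transducer A Q M) : Q → List A → Option M
  | _, [] => some 1
  | q, a :: w => (T.step q a).bind fun x => (T.lstar x.1 w).map fun m => x.2 * m

/-- `O_T^q(α)`, defined iff `δ*(q,α)` is a final state. -/
def O (T : Transducer A Q M) (q : Q) (α : List A) : Option M :=
  (T.dstar q α).bind fun p => (T.lstar q α).bind fun m => (T.rho p).map fun r => m * r

/-- The function `O_T` represented by the transducer. -/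
def Ofull (T : Transducer A Q M) (α : List A) : Option M :=
  (T.O T.start α).map fun m => T.init * m

end Transducer

/-- A subsequential failure transducer: a transducer together with a partial failure
transition function and failure output function (of equal domains, encoded by
`failStep`). -/
structure FailTransducer (A Q M : Type) [Monoid M] extends Transducer A Q M where
  failStep : Q → Option (Q × M)

namespace FailTransducer

variable {A Q M : Type} [Monoid M]

def fail (T : FailTransducer A Q M) (q : Q) : Option Q := (T.failStep q).map Prod.fst

def phi (T : FailTransducer A Q M) (q : Q) : Option M := (T.failStep q).map Prod.snd

/-- The completed transition/output functions `δ_f`, `λ_f`, as the smallest relation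
closed under the two defining clauses. `DF T q a q' m` means `δ_f(q,a) = q'` and
`λ_f(q,a) = m`. -/
inductive DF (T : FailTransducer A Q M) : Q → A → Q → M → Prop
  | base {q : Q} {a : A} {q' : Q} {m : M} :
      T.step q a = some (q', m) → DF T q a q' m
  | fail {q : Q} {a : A} {p : Q} {mf : M} {q' : Q} {m : M} :
      T.step q a = none → T.failStep q = some (p, mf) → DF T p a q' m →
      DF T q a q' (mf * m)

/-- Word extension of the completed transition and output functions. -/
inductive DFStar (T : FailTransducer A Q M) : Q → List A → Q → M → Prop
  | nil {q : Q} : DFStar T q [] q 1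
  | cons {q : Q} {a : A} {w : List A} {q' : Q} {m : M} {q'' : Q} {m' : M} :
      DF T q a q' m → DFStar T q' w q'' m' → DFStar T q (a :: w) q'' (m * m')

/-- `ORel T q α m` holds iff `O_T^q(α)` is defined and equal to `m`. -/
def ORel (T : FailTransducer A Q M) (q : Q) (α : List A) (m : M) : Prop :=
  ∃ p m' r, DFStar T q α p m' ∧ T.rho p = some r ∧ m = m' * r

/-- `OFullRel T α m` holds iff `O_T(α)` is defined and equal to `m`. -/
def OFullRel (T : FailTransducer A Q M) (α : List A) (m : M) : Prop :=
  ∃ m', T.ORel T.start α m' ∧ m = T.init * m'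

/-- The completed transition/output as a partial function (noncomputable). -/
def dfFun (T : FailTransducer A Q M) (q : Q) (a : A) : Option (Q × M) :=
  if h : ∃ x : Q × M, DF T q a x.1 x.2 then some h.choose else none

/-- Word extension of the completed transition/output as a partial function. -/
def dfStarFun (T : FailTransducer A Q M) (q : Q) (α : List A) : Option (Q × M) :=
  if h : ∃ x : Q × M, DFStar T q α x.1 x.2 then some h.choose else none

/-- `O_T^q` as a partial function. -/
def Ofun (T : FailTransducer A Q M) (q : Q) (α : List A) : Option M :=
  if h : ∃ m, T.ORel q α m then some h.choose else none

/-- `O_T` as a partial function. -/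
def OfullFun (T : FailTransducer A Q M) (α : List A) : Option M :=
  (T.Ofun T.start α).map fun m => T.init * m

/-- A failure transducer is monotonic if failure transitions preserve finality and
enabled input symbols. -/
def Monotonic (T : FailTransducer A Q M) : Prop :=
  ∀ q p, T.fail q = some p →
    ((T.rho q).isSome → (T.rho p).isSome) ∧
    ∀ a, (T.delta q a).isSome → (T.delta p a).isSome

/-- `n`-fold iteration of the failure transition function. -/
def failIter (T : FailTransducer A Q M) : ℕ → Q → Option Q
  | 0, q => some q
  | n + 1, q => (T.fail q).bind (T.failIter n)

/-- No state lies on a failure cycle. -/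
def NoFailCycles (T : FailTransducer A Q M) : Prop :=
  ∀ q n, 0 < n → T.failIter n q ≠ some q

/-- A failure transducer over `ℝ≥0` is probabilistic if the function it represents
is a probability distribution over `Σ*`. -/
def Probabilistic (F : FailTransducer A Q ℝ≥0) : Prop :=
  ∑' α : List A, ((F.OfullFun α).getD 0) = 1

end FailTransducer

/-- The composition `T ∘ F` of a transducer `T` with outputs in `Ω* × M` with a
failure transducer `F` over `Ω` (Definition 4). -/
def compStep {A Ω Q₁ Q₂ M : Type} [CommMonoid M] (T : Transducer A Q₁ (List Ω × M))
    (F : FailTransducer Ω Q₂ M) (p : Q₁ × Q₂) (a : A) : Option ((Q₁ × Q₂) × M) :=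
  (T.step p.1 a).bind fun x =>
    match x.2.1 with
    | [] => some ((x.1, p.2), x.2.2)
    | ω :: _ =>
      if (F.delta p.2 ω).isSome then
        (F.dfStarFun p.2 x.2.1).map fun y => ((x.1, y.1), x.2.2 * y.2)
      else none

def comp {A Ω Q₁ Q₂ M : Type} [CommMonoid M] (T : Transducer A Q₁ (List Ω × M))
    (F : FailTransducer Ω Q₂ M) : FailTransducer A (Q₁ × Q₂) M where
  start := (T.start, ((F.dfStarFun F.start T.init.1).map Prod.fst).getD F.start)
  step := compStep T F
  init := T.init.2 * F.init * ((F.dfStarFun F.start T.init.1).map Prod.snd).getD 1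
  rho := fun p => (T.rho p.1).bind fun x =>
    (F.dfStarFun p.2 x.1).bind fun y => (F.rho y.1).map fun r => x.2 * y.2 * r
  failStep := fun p => (F.failStep p.2).map fun y => ((p.1, y.1), y.2)

/-- The Kleene star of a transducer `V` (Definition 16): transitions entering a final
state are redirected to the initial state, which becomes the unique final state with
trivial final output; the initial output becomes trivial. -/
def kstar {A Q N : Type} [Monoid N] (V : Transducer A Q N) : Transducer A Q N where
  start := V.start
  step := fun p a => (V.step p a).map fun x =>
    ((if (V.rho x.1).isSome then V.start else x.1), x.2)
  init := 1
  rho := fun q => if q = V.start then some 1 else none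

/-- `O_T(α ∣ β)` for a transducer with outputs in `Ω* × ℝ≥0`. -/
def condVal {A Ω Q : Type} (T : Transducer A Q (List Ω × ℝ≥0)) (β : List Ω)
    (α : List A) : ℝ≥0 :=
  match T.Ofull α with
  | some x => if x.1 = β then x.2 else 0
  | none => 0

/-- A conditional probabilistic transducer: for every `β` in the first projection of
the range of `O_T`, the conditional outputs `O_T(· ∣ β)` sum to `1`. -/
def CondProb {A Ω Q : Type} (T : Transducer A Q (List Ω × ℝ≥0)) : Prop :=
  ∀ β : List Ω, (∃ α x, T.Ofull α = some x ∧ x.1 = β) →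
    ∑' α : List A, condVal T β α = 1

end

section Aux

open FailTransducer Transducer

variable {A Q M : Type} [Monoid M]

lemma failIter_add (F : FailTransducer A Q M) (m n : ℕ) (q : Q) :
    F.failIter (m + n) q = (F.failIter m q).bind (F.failIter n) := by
  induction m generalizing q with
  | zero => simp [FailTransducer.failIter]
  | succ k ih =>
    have : k + 1 + n = (k + n) + 1 := by omega
    rw [this]
    show (F.fail q).bind (F.failIter (k + n)) = _
    show _ = ((F.fail q).bind (F.failIter k)).bind (F.failIter n)
    rw [Option.bind_assoc]
    congr 1
    funext q'
    exact ih q'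

lemma mono_delta (F : FailTransducer A Q M) (hm : F.Monotonic) (a : A) :
    ∀ j p r, F.failIter j p = some r → (F.delta p a).isSome → (F.delta r a).isSome := by
  intro j
  induction j with
  | zero =>
    intro p r h hd
    simp [FailTransducer.failIter] at h
    subst h; exact hd
  | succ k ih =>
    intro p r h hd
    rw [show k + 1 = k + 1 from rfl] at h
    have h' : (F.fail p).bind (F.failIter k) = some r := h
    rcases Option.bind_eq_some_iff.mp h' with ⟨p', hp', hr⟩
    exact ih p' r hr ((hm p p' hp').2 a hd)

lemma failIter_cycle (F : FailTransducer A Q M) {n : ℕ} {q : Q}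
    (h : F.failIter n q = some q) : ∀ c, F.failIter (c * n) q = some q := by
  intro c
  induction c with
  | zero => simp [FailTransducer.failIter]
  | succ k ih =>
    have : (k + 1) * n = k * n + n := by ring
    rw [this, failIter_add, ih]
    exact h

lemma DF_exists_delta (F : FailTransducer A Q M) {q : Q} {a : A} {q' : Q} {m : M}
    (h : F.DF q a q' m) :
    ∃ k p, F.failIter k q = some p ∧ (F.delta p a).isSome := by
  induction h with
  | @base q a q' m hstep =>
    exact ⟨0, q, rfl, by simp [Transducer.delta, hstep]⟩
  | @fail q a p mf q' m hnone hfs hdf ih =>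
    rcases ih with ⟨k, p', hit, hd⟩
    refine ⟨k + 1, p', ?_, hd⟩
    show (F.fail q).bind (F.failIter k) = some p'
    simp [FailTransducer.fail, hfs, hit]

lemma cycle_delta_isSome (F : FailTransducer A Q M) (hm : F.Monotonic)
    {n : ℕ} {q : Q} (hn : 0 < n) (hc : F.failIter n q = some q)
    {a : A} {q' : Q} {m : M} (h : F.DF q a q' m) : (F.delta q a).isSome := by
  rcases DF_exists_delta F h with ⟨k, p, hit, hd⟩
  have hk : k ≤ k * n := Nat.le_mul_of_pos_right k hn
  have hsplit : k * n = k + (k * n - k) := by omega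
  have hcyc := failIter_cycle F hc k
  rw [hsplit, failIter_add, hit] at hcyc
  exact mono_delta F hm a _ p q hcyc hd

lemma DF_iff (F F' : FailTransducer A Q M)
    (hmono : F.Monotonic)
    (hbase : F'.toTransducer = F.toTransducer)
    (hfail : ∀ q, F'.failStep q =
      if ∃ n, 0 < n ∧ F.failIter n q = some q then none else F.failStep q)
    (q : Q) (a : A) (q' : Q) (m : M) : F'.DF q a q' m ↔ F.DF q a q' m := by
  have hstep : F'.step = F.step := congrArg Transducer.step hbase
  constructor
  · intro h
    induction h with
    | base hs => exact FailTransducer.DF.base (hstep ▸ hs)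
    | @fail q a p mf q'' m'' hnone hfs hdf ih =>
      have hfs' := hfail q
      rw [hfs] at hfs'
      split at hfs'
      · exact absurd hfs' (by simp)
      · exact FailTransducer.DF.fail (hstep ▸ hnone) hfs'.symm ih
  · intro h
    induction h with
    | base hs => exact FailTransducer.DF.base (hstep ▸ hs)
    | @fail q a p mf q'' m'' hnone hfs hdf ih =>
      by_cases hcyc : ∃ n, 0 < n ∧ F.failIter n q = some q
      · rcases hcyc with ⟨n, hn, hc⟩
        have := cycle_delta_isSome F hmono hn hc
          (FailTransducer.DF.fail hnone hfs hdf)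
        rw [Transducer.delta, hnone] at this
        simp at this
      · have hfs' := hfail q
        rw [if_neg hcyc] at hfs'
        exact FailTransducer.DF.fail (hstep ▸ hnone) (hfs'.trans hfs) ih

lemma DFStar_iff (F F' : FailTransducer A Q M)
    (hmono : F.Monotonic)
    (hbase : F'.toTransducer = F.toTransducer)
    (hfail : ∀ q, F'.failStep q =
      if ∃ n, 0 < n ∧ F.failIter n q = some q then none else F.failStep q)
    (q : Q) (α : List A) (q' : Q) (m : M) : F'.DFStar q α q' m ↔ F.DFStar q α q' m := by
  constructor
  · intro h
    induction h with
    | nil => exact FailTransducer.DFStar.nil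
    | cons hdf _ ih =>
      exact FailTransducer.DFStar.cons
        ((DF_iff F F' hmono hbase hfail _ _ _ _).mp hdf) ih
  · intro h
    induction h with
    | nil => exact FailTransducer.DFStar.nil
    | cons hdf _ ih =>
      exact FailTransducer.DFStar.cons
        ((DF_iff F F' hmono hbase hfail _ _ _ _).mpr hdf) ih

end Aux

/-- removing the failure transitions (and failure outputs) of states on
failure cycles from a monotonic failure transducer does not change the represented
function. -/
theorem stmt2 {A Q M : Type} [Monoid M] (F F' : FailTransducer A Q M)
    (hmono : F.Monotonic)
    (hbase : F'.toTransducer = F.toTransducer)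
    (hfail : ∀ q, F'.failStep q =
      if ∃ n, 0 < n ∧ F.failIter n q = some q then none else F.failStep q) :
    ∀ α m, F'.OFullRel α m ↔ F.OFullRel α m := by
  have hstart : F'.start = F.start := congrArg Transducer.start hbase
  have hinit : F'.init = F.init := congrArg Transducer.init hbase
  have hrho : F'.rho = F.rho := congrArg Transducer.rho hbase
  intro α m
  unfold FailTransducer.OFullRel FailTransducer.ORel
  rw [hstart, hinit, hrho]
  constructor
  · rintro ⟨m', ⟨p, m'', r, hstar, hr, heq⟩, h⟩
    exact ⟨m', ⟨p, m'', r, (DFStar_iff F F' hmono hbase hfail _ _ _ _).mp hstar,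
      hr, heq⟩, h⟩
  · rintro ⟨m', ⟨p, m'', r, hstar, hr, heq⟩, h⟩
    exact ⟨m', ⟨p, m'', r, (DFStar_iff F F' hmono hbase hfail _ _ _ _).mpr hstar,
      hr, heq⟩, h⟩
end

section
/- With T and F as in the composition construction, for every pair ⟨p₁,p₂⟩ and word α ∈ Σ*, if δ₁*(p₁,α) is defined and δ₂_{f₂}*(p₂, Proj₁(λ₁*(p₁,α))) is defined, then δ_f*(⟨p₁,p₂⟩, α) is defined in T∘F. -/
open scoped NNReal Computability
open Classical

section Aux

variable {A Ω Q₁ Q₂ M : Type} [CommMonoid M]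

lemma DF_det {Q : Type} {F : FailTransducer Ω Q M} {q : Q} {a : Ω} {q' q'' : Q} {m m' : M}
    (h1 : F.DF q a q' m) (h2 : F.DF q a q'' m') : q' = q'' ∧ m = m' := by
  induction h1 generalizing q'' m' with
  | base hs =>
    cases h2 with
    | base hs' => rw [hs] at hs'; exact ⟨(Prod.mk.injEq _ _ _ _ ▸ Option.some.inj hs').1,
        (Prod.mk.injEq _ _ _ _ ▸ Option.some.inj hs').2⟩
    | fail hn _ _ => rw [hs] at hn; cases hn
  | fail hn hf hd ih =>
    cases h2 with
    | base hs' => rw [hs'] at hn; cases hn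
    | fail hn' hf' hd' =>
      rw [hf] at hf'
      obtain ⟨h1, h2⟩ := Prod.mk.injEq _ _ _ _ ▸ Option.some.inj hf'
      subst h1; subst h2
      obtain ⟨hq, hm⟩ := ih hd'
      exact ⟨hq, by rw [hm]⟩

lemma DFStar_det {Q : Type} {F : FailTransducer Ω Q M} {q : Q} {w : List Ω} {q' q'' : Q}
    {m m' : M} (h1 : F.DFStar q w q' m) (h2 : F.DFStar q w q'' m') : q' = q'' ∧ m = m' := by
  induction h1 generalizing q'' m' with
  | nil => cases h2 with | nil => exact ⟨rfl, rfl⟩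
  | cons hd hs ih =>
    cases h2 with
    | cons hd' hs' =>
      obtain ⟨hq, hm⟩ := DF_det hd hd'
      subst hq; subst hm
      obtain ⟨hq2, hm2⟩ := ih hs'
      exact ⟨hq2, by rw [hm2]⟩

lemma dfStarFun_eq {Q : Type} {F : FailTransducer Ω Q M} {q : Q} {w : List Ω} {q' : Q} {m : M}
    (h : F.DFStar q w q' m) : F.dfStarFun q w = some (q', m) := by
  rw [FailTransducer.dfStarFun, dif_pos ⟨(q', m), h⟩]
  have hsp := (⟨(q', m), h⟩ : ∃ x : Q × M, F.DFStar q w x.1 x.2).choose_spec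
  obtain ⟨h1, h2⟩ := DFStar_det hsp h
  congr 1
  exact Prod.ext h1 h2

lemma DFStar_split {Q : Type} {F : FailTransducer Ω Q M} {q : Q} {w₁ w₂ : List Ω} {q'' : Q}
    {m : M} (h : F.DFStar q (w₁ ++ w₂) q'' m) :
    ∃ q' m₁ m₂, F.DFStar q w₁ q' m₁ ∧ F.DFStar q' w₂ q'' m₂ := by
  induction w₁ generalizing q m with
  | nil => exact ⟨q, 1, m, .nil, h⟩
  | cons a w₁ ih =>
    cases h with
    | cons hd hs =>
      obtain ⟨q', m₁, m₂, h1, h2⟩ := ih hs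
      exact ⟨q', _ * m₁, m₂, .cons hd h1, h2⟩

/-- Lifting one input letter through the composition. -/
lemma comp_DF_step (T : Transducer A Q₁ (List Ω × M)) (F : FailTransducer Ω Q₂ M)
    {p₂ : Q₂} {ω : Ω} {q' : Q₂} {m : M} (hDF : F.DF p₂ ω q' m) :
    ∀ {rest : List Ω} {r : Q₂} {m' : M}, F.DFStar q' rest r m' →
    ∀ {a : A} {p₁ q₁' : Q₁} {m1 : M}, T.step p₁ a = some (q₁', (ω :: rest, m1)) →
    ∃ mm, (comp T F).DF (p₁, p₂) a (q₁', r) mm := by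
  induction hDF with
  | @base q ω' q' m hs =>
    intro rest r m' hrest a p₁ q₁' m1 hT
    have hdelta : (F.delta q ω').isSome := by
      simp [Transducer.delta, hs]
    have hdfs : F.dfStarFun q (ω' :: rest) = some (r, m * m') :=
      dfStarFun_eq (.cons (.base hs) hrest)
    refine ⟨m1 * (m * m'), FailTransducer.DF.base ?_⟩
    show compStep T F (p₁, q) a = _
    simp [compStep, hT, hdelta, hdfs]
  | @fail q ω' p mf q' m hn hf _ ih =>
    intro rest r m' hrest a p₁ q₁' m1 hT
    obtain ⟨mm, hmm⟩ := ih hrest hT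
    refine ⟨mf * mm, FailTransducer.DF.fail ?_ ?_ hmm⟩
    · have hdn : (F.delta q ω').isSome = false := by
        simp [Transducer.delta, hn]
      show compStep T F (p₁, q) a = none
      simp [compStep, hT, hdn]
    · show ((comp T F).failStep (p₁, q)) = some ((p₁, p), mf)
      show (F.failStep q).map _ = _
      rw [hf]; rfl

end Aux

/-- if `δ₁*(p₁,α)` is defined and the completed word transition of `F`
on `Proj₁(λ₁*(p₁,α))` from `p₂` is defined, then `δ_f*(⟨p₁,p₂⟩,α)` is defined in
`T∘F`. -/
theorem stmt6 {A Ω Q₁ Q₂ M : Type} [CommMonoid M]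
    (T : Transducer A Q₁ (List Ω × M)) (F : FailTransducer Ω Q₂ M)
    (hnc : F.NoFailCycles) :
    ∀ p₁ p₂ (α : List A) q₁ β o₁, T.dstar p₁ α = some q₁ →
      T.lstar p₁ α = some (β, o₁) → (F.dfStarFun p₂ β).isSome →
      ∃ q m, (comp T F).DFStar (p₁, p₂) α q m := by
  intro p₁ p₂ α
  induction α generalizing p₁ p₂ with
  | nil => exact fun _ _ _ _ _ _ => ⟨(p₁, p₂), 1, .nil⟩
  | cons a α ih =>
    intro q₁ β o₁ hd hl hF
    rw [Transducer.dstar] at hd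
    rw [Transducer.lstar] at hl
    rw [Transducer.delta] at hd
    cases hs : T.step p₁ a with
    | none => rw [hs] at hd; cases hd
    | some x =>
      obtain ⟨r₁, γ, m1⟩ := x
      rw [hs] at hd hl
      simp only [Option.bind_some] at hd hl
      cases hls : T.lstar r₁ α with
      | none => rw [hls] at hl; cases hl
      | some y =>
        obtain ⟨β', o'⟩ := y
        rw [hls] at hl
        have hβ' : β = γ ++ β' := by
          have h2 := Option.some.inj hl.symm
          exact congrArg Prod.fst h2
        subst hβ'
        rw [FailTransducer.dfStarFun] at hF
        by_cases hex : ∃ x : Q₂ × M, F.DFStar p₂ (γ ++ β') x.1 x.2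
        · obtain ⟨⟨s, ms⟩, hss⟩ := hex
          obtain ⟨r, mr₁, mr₂, h1, h2⟩ := DFStar_split hss
          have hstep : ∃ mm, (comp T F).DF (p₁, p₂) a (r₁, r) mm := by
            cases γ with
            | nil =>
              cases h1
              refine ⟨m1, FailTransducer.DF.base ?_⟩
              show compStep T F (p₁, p₂) a = _
              simp [compStep, hs]
            | cons ω rest =>
              cases h1 with
              | cons hDF hrest => exact comp_DF_step T F hDF hrest hs
          obtain ⟨mm, hmm⟩ := hstep
          have hF' : (F.dfStarFun r β').isSome := by
            rw [dfStarFun_eq h2]; rfl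
          obtain ⟨q, m, hq⟩ := ih r₁ r q₁ β' o' hd hls hF'
          exact ⟨q, mm * m, .cons hmm hq⟩
        · rw [dif_neg hex] at hF; cases hF
end

section
/- If F is a monotonic failure transducer and for every p ∈ Dom(f₂): (i) for all α ∈ Proj₁(Rng(λ₁)), if δ₂_{f₂}*(p,α) is defined then δ₂_{f₂}*(f₂(p),α) is defined, and (ii) for all α ∈ Proj₁(Rng(ρ₁)), if δ₂_{f₂}*(p,α) ∈ F₂ then δ₂_{f₂}*(f₂(p),α) ∈ F₂, then the composition T∘F is a monotonic failure transducer. -/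
open scoped NNReal Computability
open Classical

/-- under the two compatibility conditions on failure transitions of a
monotonic `F` with respect to the outputs of `T`, the composition `T∘F` is
monotonic. -/
theorem stmt9 {A Ω Q₁ Q₂ M : Type} [CommMonoid M]
    (T : Transducer A Q₁ (List Ω × M)) (F : FailTransducer Ω Q₂ M)
    (hnc : F.NoFailCycles) (hmono : F.Monotonic)
    (h1 : ∀ p r, F.fail p = some r → ∀ p₁ a β o, T.lam p₁ a = some (β, o) →
      (F.dfStarFun p β).isSome → (F.dfStarFun r β).isSome)
    (h2 : ∀ p r, F.fail p = some r → ∀ p₁ β o, T.rho p₁ = some (β, o) →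
      ∀ q₂ m₂, F.dfStarFun p β = some (q₂, m₂) → (F.rho q₂).isSome →
        ∃ q₂' m₂', F.dfStarFun r β = some (q₂', m₂') ∧ (F.rho q₂').isSome) :
    (comp T F).Monotonic := by
  rintro ⟨q₁, q₂⟩ p hp
  -- unpack failure transition of composition
  simp only [comp, FailTransducer.fail, Option.map_map, Option.map_eq_some_iff] at hp
  obtain ⟨⟨r, mf⟩, hstep, hpeq⟩ := hp
  have hfq : F.fail q₂ = some r := by
    simp [FailTransducer.fail, hstep]
  subst hpeq
  constructor
  · -- finality preserved
    intro hros
    rw [Option.isSome_iff_exists] at hros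
    obtain ⟨v, hv⟩ := hros
    simp only [comp, Option.bind_eq_some_iff, Option.map_eq_some_iff] at hv
    obtain ⟨⟨β, o⟩, hrho1, ⟨y₁, y₂⟩, hdfs, rr, hrr, _⟩ := hv
    obtain ⟨q₂', m₂', hdfs', hros'⟩ :=
      h2 q₂ r hfq q₁ β o hrho1 y₁ y₂ hdfs (by simp [hrr])
    rw [Option.isSome_iff_exists] at hros'
    obtain ⟨rr', hrr'⟩ := hros'
    simp [comp, hrho1, hdfs', hrr']
  · -- transitions preserved
    intro a hds
    rw [Option.isSome_iff_exists] at hds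
    obtain ⟨q', hq'⟩ := hds
    simp only [comp, Transducer.delta, compStep, Option.map_eq_some_iff,
      Option.bind_eq_some_iff] at hq'
    obtain ⟨⟨x, m⟩, hx, hmatch⟩ := hq'
    simp only [comp, Transducer.delta, compStep, Option.isSome_iff_exists]
    obtain ⟨⟨x1, ⟨β, o⟩⟩, hstep1, hrest⟩ := hx
    have hlam : T.lam q₁ a = some (β, o) := by simp [Transducer.lam, hstep1]
    cases β with
    | nil =>
      exact ⟨(x1, r), by simp [hstep1]⟩
    | cons ω β' =>
      simp only at hrest
      by_cases hdelta : (Option.map Prod.fst (F.step q₂ ω)).isSome = true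
      · replace hrest := (if_pos hdelta).symm.trans hrest
        have hdelta' : (F.delta r ω).isSome := (hmono q₂ r hfq).2 ω hdelta
        rw [Option.map_eq_some_iff] at hrest
        obtain ⟨y, hy, _⟩ := hrest
        have hdfs' : (F.dfStarFun r (ω :: β')).isSome :=
          h1 q₂ r hfq q₁ a (ω :: β') o hlam (by simp [hy])
        rw [Option.isSome_iff_exists] at hdfs'
        obtain ⟨y', hy'⟩ := hdfs'
        obtain ⟨z, hz⟩ : ∃ z, F.step r ω = some z := by
          cases hz : F.step r ω with
          | none => simp [Transducer.delta, hz] at hdelta'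
          | some z => exact ⟨z, rfl⟩
        refine ⟨(x1, y'.1), ?_⟩
        simp [hstep1, hy', Transducer.delta, hz]
        exact ⟨z.1, z.2, rfl⟩
      · replace hrest := (if_neg hdelta).symm.trans hrest
        exact absurd hrest (by simp)
end

section
/- Let V be a transducer whose domain Dom(O_V) is prefix-free, with no transitions entering the initial state s₁, no transitions leaving final states, s₁ ∉ F₁, ι₁ = ⟨ε,1̄⟩, and all final outputs equal to ⟨ε,1̄⟩. Let V* be its Kleene star (final states redirected to s₁). Then Dom(O_{V*}) = (Dom(O_V))*, the Kleene star of the language Dom(O_V). -/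
open scoped NNReal Computability
open Classical

-- Auxiliary lemmas for stmt10

section Aux

variable {A Q M : Type} [Monoid M]

theorem lstar_isSome_of_dstar (T : Transducer A Q M) :
    ∀ (α : List A) (q : Q), (T.dstar q α).isSome → (T.lstar q α).isSome := by
  intro α
  induction α with
  | nil => intro q _; simp [Transducer.lstar]
  | cons a w ih =>
    intro q h
    cases hs : T.step q a with
    | none => simp [Transducer.dstar, Transducer.delta, hs] at h
    | some x =>
      simp [Transducer.dstar, Transducer.delta, hs] at h
      have := ih x.1 h
      simp [Transducer.lstar, hs, Option.isSome_map]
      exact this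

theorem O_isSome_iff (T : Transducer A Q M) (q : Q) (α : List A) :
    (T.O q α).isSome ↔ ∃ p, T.dstar q α = some p ∧ (T.rho p).isSome := by
  constructor
  · intro h
    cases hd : T.dstar q α with
    | none => simp [Transducer.O, hd] at h
    | some p =>
      refine ⟨p, rfl, ?_⟩
      cases hr : T.rho p with
      | none =>
        cases hl : T.lstar q α <;> simp [Transducer.O, hd, hr, hl] at h
      | some r => simp
  · rintro ⟨p, hd, hr⟩
    have hl := lstar_isSome_of_dstar T α q (by simp [hd])
    cases hl2 : T.lstar q α with
    | none => simp [hl2] at hl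
    | some m =>
      cases hr2 : T.rho p with
      | none => simp [hr2] at hr
      | some r => simp [Transducer.O, hd, hl2, hr2]

theorem dstar_append (T : Transducer A Q M) :
    ∀ (α β : List A) (q : Q),
      T.dstar q (α ++ β) = (T.dstar q α).bind fun p => T.dstar p β := by
  intro α
  induction α with
  | nil => intro β q; simp [Transducer.dstar]
  | cons a w ih =>
    intro β q
    cases hs : T.step q a with
    | none => simp [Transducer.dstar, Transducer.delta, hs]
    | some x => simp [Transducer.dstar, Transducer.delta, hs, ih]

theorem kstar_dstar_cons (V : Transducer A Q M) (q : Q) (a : A) (w : List A) :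
    (kstar V).dstar q (a :: w) = (V.step q a).bind fun x =>
      (kstar V).dstar (if (V.rho x.1).isSome then V.start else x.1) w := by
  cases hs : V.step q a with
  | none => simp [Transducer.dstar, Transducer.delta, kstar, hs]
  | some x => simp [Transducer.dstar, Transducer.delta, kstar, hs]

theorem kstar_run (V : Transducer A Q M)
    (hnoout : ∀ q a, (V.rho q).isSome → V.delta q a = none) :
    ∀ (α : List A) (q p : Q), α ≠ [] → V.dstar q α = some p → (V.rho p).isSome →
      (kstar V).dstar q α = some V.start := by
  intro α
  induction α with
  | nil => intro q p h; exact absurd rfl h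
  | cons a w ih =>
    intro q p _ hd hr
    cases hs : V.step q a with
    | none => simp [Transducer.dstar, Transducer.delta, hs] at hd
    | some x =>
      simp [Transducer.dstar, Transducer.delta, hs] at hd
      rw [kstar_dstar_cons, hs]
      cases w with
      | nil =>
        simp [Transducer.dstar] at hd
        subst hd
        simp [hr, Transducer.dstar]
      | cons b w' =>
        have hx : ¬ (V.rho x.1).isSome := by
          intro hfin
          have := hnoout x.1 b hfin
          simp [Transducer.dstar, this] at hd
        rw [Option.bind_some, if_neg hx]
        exact ih x.1 p (by simp) hd hr

theorem kstar_split (V : Transducer A Q M)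
    (hnoin : ∀ p a, V.delta p a ≠ some V.start) :
    ∀ (α : List A) (q : Q), α ≠ [] → (kstar V).dstar q α = some V.start →
      ∃ β γ p, α = β ++ γ ∧ β ≠ [] ∧ V.dstar q β = some p ∧ (V.rho p).isSome ∧
        (kstar V).dstar V.start γ = some V.start := by
  intro α
  induction α with
  | nil => intro q h; exact absurd rfl h
  | cons a w ih =>
    intro q _ hd
    rw [kstar_dstar_cons] at hd
    cases hs : V.step q a with
    | none => simp [hs] at hd
    | some x =>
      rw [hs] at hd
      rw [Option.bind_some] at hd
      by_cases hfin : (V.rho x.1).isSome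
      · rw [if_pos hfin] at hd
        exact ⟨[a], w, x.1, rfl, by simp, by simp [Transducer.dstar, Transducer.delta, hs], hfin, hd⟩
      · rw [if_neg hfin] at hd
        cases w with
        | nil =>
          simp [Transducer.dstar] at hd
          exact absurd (by simp [Transducer.delta, hs, hd] : V.delta q a = some V.start)
            (hnoin q a)
        | cons b w' =>
          obtain ⟨β, γ, p, heq, hβ, hdβ, hrp, hγ⟩ := ih x.1 (by simp) hd
          exact ⟨a :: β, γ, p, by simp [heq], by simp,
            by simp [Transducer.dstar, Transducer.delta, hs, hdβ], hrp, hγ⟩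

end Aux

/-- the domain of the Kleene star transducer `V*` is the Kleene star
of the language `Dom(O_V)`. -/
theorem stmt10 {A Ω Q M : Type} [CommMonoid M] (V : Transducer A Q (List Ω × M))
    (hpf : ∀ α γ, (V.Ofull α).isSome → (V.Ofull (α ++ γ)).isSome → γ = [])
    (hnoin : ∀ p a, V.delta p a ≠ some V.start)
    (hnoout : ∀ q a, (V.rho q).isSome → V.delta q a = none)
    (hsnf : V.rho V.start = none)
    (hinit : V.init = 1)
    (hrho1 : ∀ q m, V.rho q = some m → m = 1) :
    ({α | ((kstar V).Ofull α).isSome} : Language A) =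
      @KStar.kstar (Language A) _ ({α | (V.Ofull α).isSome} : Language A) := by
  have hdom : ∀ α : List A, ((kstar V).Ofull α).isSome ↔
      (kstar V).dstar V.start α = some V.start := by
    intro α
    rw [Transducer.Ofull, Option.isSome_map, O_isSome_iff]
    constructor
    · rintro ⟨p, hd, hr⟩
      have hst : (kstar V).start = V.start := rfl
      rw [hst] at hd
      by_cases hps : p = V.start
      · rw [hps] at hd; exact hd
      · simp [kstar, hps] at hr
    · intro hd
      exact ⟨V.start, hd, by simp [kstar]⟩
  have hdomV : ∀ α : List A, (V.Ofull α).isSome ↔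
      ∃ p, V.dstar V.start α = some p ∧ (V.rho p).isSome := by
    intro α
    rw [Transducer.Ofull, Option.isSome_map, O_isSome_iff]
  ext α
  simp only [Language.mem_kstar, Set.mem_setOf_eq]
  constructor
  · intro h
    rw [hdom] at h
    clear hpf hinit hrho1
    have key : ∀ n : ℕ, ∀ α : List A, α.length ≤ n →
        (kstar V).dstar V.start α = some V.start →
        α ∈ @KStar.kstar (Language A) _ ({α | (V.Ofull α).isSome} : Language A) := by
      intro n
      induction n with
      | zero =>
        intro α hlen _
        have : α = [] := List.eq_nil_of_length_eq_zero (Nat.le_zero.mp hlen)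
        subst this
        exact ⟨[], rfl, by simp⟩
      | succ n ih =>
        intro α hlen h
        cases hα : α with
        | nil => exact ⟨[], rfl, by simp⟩
        | cons a w =>
          subst hα
          obtain ⟨β, γ, p, heq, hβ, hdβ, hrp, hγ⟩ :=
            kstar_split V hnoin (a :: w) V.start (by simp) h
          have hγlen : γ.length ≤ n := by
            have h1 : β.length + γ.length = (a :: w).length := by
              rw [heq, List.length_append]
            have h2 : 1 ≤ β.length := by
              cases β with
              | nil => exact absurd rfl hβ
              | cons b b' => simp
            simp only [List.length_cons] at h1 hlen
            omega
          obtain ⟨S, hS, hSmem⟩ := ih γ hγlen hγ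
          refine ⟨β :: S, ?_, ?_⟩
          · simp [heq, hS]
          · intro y hy
            rcases List.mem_cons.mp hy with hy | hy
            · subst hy
              exact Set.mem_setOf_eq ▸ (hdomV y).mpr ⟨p, hdβ, hrp⟩
            · exact hSmem y hy
    exact key α.length α le_rfl h
  · rintro ⟨S, hS, hSmem⟩
    rw [hdom]
    subst hS
    clear hpf hinit hrho1
    induction S with
    | nil => simp [Transducer.dstar]
    | cons β S' ih =>
      have hβ : (V.Ofull β).isSome := hSmem β (by simp)
      obtain ⟨p, hdβ, hrp⟩ := (hdomV β).mp hβ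
      have hβne : β ≠ [] := by
        intro hnil
        subst hnil
        simp [Transducer.dstar] at hdβ
        rw [← hdβ, hsnf] at hrp
        simp at hrp
      have h1 : (kstar V).dstar V.start β = some V.start :=
        kstar_run V hnoout β V.start p hβne hdβ hrp
      have h2 := ih (fun y hy => hSmem y (by simp [hy]))
      simp only [List.flatten_cons]
      rw [dstar_append, h1]
      exact h2
end

section
/- If V is a conditional probabilistic transducer satisfying the Kleene-star preconditions, then its Kleene star V* is also conditional probabilistic: for every β = b₁⋯bₙ ∈ Proj₁(Rng(O_{V*})), the sum Σ_{α : O_{V*}(α) = ⟨β, m⟩} O_{V*}(α | β) equals 1. -/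
open scoped NNReal Computability
open Classical

namespace StarAux

open Transducer

variable {A Q M : Type} [Monoid M]

/-- Combined run function: state and accumulated output. -/
def run (T : Transducer A Q M) : Q → List A → Option (Q × M)
  | q, [] => some (q, 1)
  | q, a :: w => (T.step q a).bind fun x => (run T x.1 w).map fun y => (y.1, x.2 * y.2)

lemma dstar_eq_run (T : Transducer A Q M) (q : Q) (α : List A) :
    T.dstar q α = (run T q α).map Prod.fst := by
  induction α generalizing q with
  | nil => rfl
  | cons a w ih =>
    simp only [Transducer.dstar, run, Transducer.delta]
    cases hs : T.step q a with
    | none => rfl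
    | some x =>
      simp only [Option.map_some, Option.bind_some, ih]
      cases run T x.1 w <;> rfl

lemma lstar_eq_run (T : Transducer A Q M) (q : Q) (α : List A) :
    T.lstar q α = (run T q α).map Prod.snd := by
  induction α generalizing q with
  | nil => rfl
  | cons a w ih =>
    simp only [Transducer.lstar, run]
    cases hs : T.step q a with
    | none => rfl
    | some x =>
      simp only [Option.bind_some, ih]
      cases run T x.1 w <;> rfl

lemma O_eq_run (T : Transducer A Q M) (q : Q) (α : List A) :
    T.O q α = (run T q α).bind fun x => (T.rho x.1).map fun r => x.2 * r := by
  rw [Transducer.O, dstar_eq_run, lstar_eq_run]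
  cases run T q α with
  | none => rfl
  | some x => cases T.rho x.1 <;> rfl

lemma run_append (T : Transducer A Q M) (q : Q) (α γ : List A) :
    run T q (α ++ γ) =
      (run T q α).bind fun x => (run T x.1 γ).map fun y => (y.1, x.2 * y.2) := by
  induction α generalizing q with
  | nil =>
    simp only [List.nil_append, run, Option.bind_some]
    cases run T q γ with
    | none => rfl
    | some y => simp [one_mul]
  | cons a w ih =>
    simp only [List.cons_append, run, List.append_eq]
    cases hs : T.step q a with
    | none => rfl
    | some x =>
      simp only [Option.bind_some]
      rw [ih]
      cases run T x.1 w with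
      | none => rfl
      | some y =>
        simp only [Option.map_some, Option.bind_some]
        cases run T y.1 γ with
        | none => rfl
        | some z => simp [mul_assoc]

variable {V : Transducer A Q M}

lemma kstar_step (q : Q) (a : A) :
    (kstar V).step q a = (V.step q a).map fun x =>
      ((if (V.rho x.1).isSome then V.start else x.1), x.2) := rfl

lemma kstar_run_of_final
    (hnoout : ∀ q a, (V.rho q).isSome → V.delta q a = none)
    {α : List A} {q p : Q} {n : M}
    (hrun : run V q α = some (p, n)) (hfin : (V.rho p).isSome) (hne : α ≠ []) :
    run (kstar V) q α = some (V.start, n) := by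
  induction α generalizing q n with
  | nil => exact absurd rfl hne
  | cons a w ih =>
    simp only [run, Option.bind_eq_some_iff, Option.map_eq_some_iff] at hrun
    obtain ⟨x, hs, y, hr, hy⟩ := hrun
    have hy1 : y.1 = p := congrArg Prod.fst hy
    have hy2 : x.2 * y.2 = n := congrArg Prod.snd hy
    cases w with
    | nil =>
      obtain rfl : y = (x.1, 1) := (Option.some_inj.mp hr).symm
      have hx1p : x.1 = p := hy1
      have hfin' : (V.rho x.1).isSome := by rw [hx1p]; exact hfin
      have hstep_k : (kstar V).step q a = some (V.start, x.2) := by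
        rw [kstar_step, hs]; simp [hfin']
      simp only [run, hstep_k, Option.bind_some, Option.map_some]
      rw [← hy2]
    | cons b w' =>
      have hstep' : (V.delta x.1 b).isSome := by
        simp only [run, Option.bind_eq_some_iff] at hr
        obtain ⟨z, hz, -⟩ := hr
        simp [Transducer.delta, hz]
      have hnf : ¬ (V.rho x.1).isSome := by
        intro h
        rw [hnoout x.1 b h] at hstep'
        simp at hstep'
      have hry : run V x.1 (b :: w') = some (p, y.2) := by
        rw [hr, ← hy1]
      have hks := ih hry (by simp)
      have hstep_k : (kstar V).step q a = some (x.1, x.2) := by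
        rw [kstar_step, hs]; simp [hnf]
      have hrw : run (kstar V) q (a :: b :: w') = ((kstar V).step q a).bind fun z =>
          (run (kstar V) z.1 (b :: w')).map fun y => (y.1, z.2 * y.2) := rfl
      rw [hrw, hstep_k, Option.bind_some, hks, Option.map_some, ← hy2]

lemma kstar_run_decomp
    (hnoin : ∀ p a, V.delta p a ≠ some V.start)
    {α : List A} {q : Q} {n : M}
    (hrun : run (kstar V) q α = some (V.start, n)) (hne : α ≠ []) :
    ∃ α₁ α₂ p r n₁ n₂, α = α₁ ++ α₂ ∧ α₁ ≠ [] ∧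
      run V q α₁ = some (p, n₁) ∧ V.rho p = some r ∧
      run (kstar V) V.start α₂ = some (V.start, n₂) ∧ n = n₁ * n₂ := by
  induction α generalizing q n with
  | nil => exact absurd rfl hne
  | cons a w ih =>
    simp only [run, kstar_step, Option.bind_eq_some_iff, Option.map_eq_some_iff] at hrun
    obtain ⟨x', ⟨x, hs, hx'⟩, y, hry, hy⟩ := hrun
    have hy1 : y.1 = V.start := congrArg Prod.fst hy
    have hy2 : x'.2 * y.2 = n := congrArg Prod.snd hy
    have hx'2 : x'.2 = x.2 := by rw [← hx']
    by_cases hfin : (V.rho x.1).isSome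
    · obtain ⟨r, hr⟩ := Option.isSome_iff_exists.mp hfin
      refine ⟨[a], w, x.1, r, x.2 * 1, y.2, rfl, by simp, ?_, hr, ?_, ?_⟩
      · simp [run, hs]
      · have hx'1 : x'.1 = V.start := by rw [← hx']; simp [hfin]
        rw [hx'1] at hry
        rw [hry, ← hy1]
      · rw [← hy2, hx'2, mul_one]
    · have hx'1 : x'.1 = x.1 := by rw [← hx']; simp [hfin]
      rw [hx'1] at hry
      have hwne : w ≠ [] := by
        intro hw
        subst hw
        have : (x.1, (1 : M)) = y := Option.some_inj.mp hry
        have hx1 : x.1 = V.start := by rw [← hy1, ← this]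
        exact hnoin q a (by simp [Transducer.delta, hs, hx1])
      have hry' : run (kstar V) x.1 w = some (V.start, y.2) := by
        rw [hry, ← hy1]
      obtain ⟨w₁, w₂, p, r, n₁, n₂, hw, hw₁ne, hrw₁, hrp, hrw₂, hn⟩ := ih hry' hwne
      refine ⟨a :: w₁, w₂, p, r, x.2 * n₁, n₂, by rw [hw, List.cons_append], by simp,
        ?_, hrp, hrw₂, ?_⟩
      · simp [run, hs, hrw₁]
      · rw [← hy2, hx'2, hn, mul_assoc]

lemma kstar_Ofull_iff {α : List A} {x : M} :
    (kstar V).Ofull α = some x ↔ run (kstar V) V.start α = some (V.start, x) := by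
  have hO : (kstar V).Ofull α = ((kstar V).O V.start α).map fun m => (1 : M) * m := rfl
  rw [hO, O_eq_run]
  constructor
  · intro h
    simp only [Option.map_eq_some_iff, Option.bind_eq_some_iff, Option.map_eq_some_iff] at h
    obtain ⟨m, ⟨y, hy, r, hr, hmr⟩, hm⟩ := h
    have hrho : (kstar V).rho y.1 = if y.1 = V.start then some 1 else none := rfl
    rw [hrho] at hr
    by_cases hys : y.1 = V.start
    · rw [if_pos hys] at hr
      have hr1 : r = 1 := by injection hr.symm
      rw [hy]
      have : y.2 = x := by rw [← hm, ← hmr, hr1, mul_one, one_mul]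
      rw [← this, ← hys]
    · rw [if_neg hys] at hr; exact absurd hr (by simp)
  · intro h
    rw [h]
    have hrho : (kstar V).rho V.start = some 1 := by
      show (if V.start = V.start then some 1 else none) = some 1
      rw [if_pos rfl]
    simp [hrho]

lemma V_Ofull_iff (hinit : V.init = 1) (hrho1 : ∀ q m, V.rho q = some m → m = 1)
    {α : List A} {x : M} :
    V.Ofull α = some x ↔ ∃ p, run V V.start α = some (p, x) ∧ (V.rho p).isSome := by
  rw [Transducer.Ofull, O_eq_run, hinit]
  constructor
  · intro h
    simp only [Option.map_eq_some_iff, Option.bind_eq_some_iff, Option.map_eq_some_iff] at h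
    obtain ⟨m, ⟨y, hy, r, hr, hmr⟩, hm⟩ := h
    have hr1 : r = 1 := hrho1 _ _ hr
    refine ⟨y.1, ?_, by simp [hr]⟩
    have hyx : y.2 = x := by rw [← hm, ← hmr, hr1, mul_one, one_mul]
    rw [hy, ← hyx]
  · rintro ⟨p, hrun, hfin⟩
    obtain ⟨r, hr⟩ := Option.isSome_iff_exists.mp hfin
    rw [hrun]
    have hr1 : r = 1 := hrho1 _ _ hr
    simp [hr, hr1, mul_one, one_mul]

end StarAux

section Stmt12Aux

open StarAux Transducer

variable {A Ω Q : Type}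

lemma condVal_of_some {T : Transducer A Q (List Ω × ℝ≥0)} {β : List Ω} {α : List A}
    {x : List Ω × ℝ≥0} (h : T.Ofull α = some x) :
    condVal T β α = if x.1 = β then x.2 else 0 := by
  unfold condVal
  rw [h]

lemma condVal_of_none {T : Transducer A Q (List Ω × ℝ≥0)} {β : List Ω} {α : List A}
    (h : T.Ofull α = none) : condVal T β α = 0 := by
  unfold condVal
  rw [h]

lemma condVal_ne_zero {T : Transducer A Q (List Ω × ℝ≥0)} {β : List Ω} {α : List A}
    (h : condVal T β α ≠ 0) :
    ∃ x, T.Ofull α = some x ∧ x.1 = β ∧ x.2 = condVal T β α := by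
  cases hO : T.Ofull α with
  | none => exact absurd (condVal_of_none hO) h
  | some x =>
    rw [condVal_of_some hO] at h ⊢
    by_cases hx : x.1 = β
    · exact ⟨x, rfl, hx, by rw [if_pos hx]⟩
    · rw [if_neg hx] at h; exact absurd rfl h

lemma list_one_def : (1 : List Ω) = [] := rfl

lemma prod_fst_mul (x y : List Ω × ℝ≥0) : (x * y).1 = x.1 ++ y.1 := rfl

lemma prod_snd_mul (x y : List Ω × ℝ≥0) : (x * y).2 = x.2 * y.2 := rfl

end Stmt12Aux

open scoped ENNReal

/-- the Kleene star of a conditional probabilistic transducer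
satisfying the Kleene-star preconditions is conditional probabilistic. -/
theorem stmt12 {A Ω Q : Type} (V : Transducer A Q (List Ω × ℝ≥0))
    (hpf : ∀ α γ, (V.Ofull α).isSome → (V.Ofull (α ++ γ)).isSome → γ = [])
    (hnoin : ∀ p a, V.delta p a ≠ some V.start)
    (hnoout : ∀ q a, (V.rho q).isSome → V.delta q a = none)
    (hsnf : V.rho V.start = none)
    (hinit : V.init = 1)
    (hrho1 : ∀ q m, V.rho q = some m → m = 1)
    (hrange : {β | ∃ α x, V.Ofull α = some x ∧ x.1 = β} = {β | ∃ ω : Ω, β = [ω]})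
    (hcond : CondProb V) :
    CondProb (kstar V) := by
  classical
  have hsing : ∀ ω : Ω, ∃ α x, V.Ofull α = some x ∧ x.1 = [ω] := by
    intro ω
    have h : [ω] ∈ {β | ∃ α x, V.Ofull α = some x ∧ x.1 = β} := by
      rw [hrange]; exact ⟨ω, rfl⟩
    exact h
  have hOnil : (kstar V).Ofull ([] : List A) = some 1 :=
    StarAux.kstar_Ofull_iff.mpr rfl
  -- decomposition at the level of Ofull
  have hdec : ∀ (α : List A) (x : List Ω × ℝ≥0), α ≠ [] →
      (kstar V).Ofull α = some x →
      ∃ α₁ α₂ ω n₁ n₂, α = α₁ ++ α₂ ∧ V.Ofull α₁ = some n₁ ∧ n₁.1 = [ω] ∧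
        (kstar V).Ofull α₂ = some n₂ ∧ x.1 = ω :: n₂.1 ∧ x.2 = n₁.2 * n₂.2 := by
    intro α x hne hO
    have hrun := StarAux.kstar_Ofull_iff.mp hO
    obtain ⟨α₁, α₂, p, r, n₁, n₂, hα, hα₁ne, hr₁, hrp, hr₂, hx⟩ :=
      StarAux.kstar_run_decomp hnoin hrun hne
    have hOf₁ : V.Ofull α₁ = some n₁ :=
      (StarAux.V_Ofull_iff hinit hrho1).mpr ⟨p, hr₁, by simp [hrp]⟩
    have hOf₂ : (kstar V).Ofull α₂ = some n₂ := StarAux.kstar_Ofull_iff.mpr hr₂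
    obtain ⟨ω, hω⟩ : ∃ ω, n₁.1 = [ω] := by
      have hmem : n₁.1 ∈ {β | ∃ α x, V.Ofull α = some x ∧ x.1 = β} := ⟨α₁, n₁, hOf₁, rfl⟩
      rw [hrange] at hmem
      exact hmem
    refine ⟨α₁, α₂, ω, n₁, n₂, hα, hOf₁, hω, hOf₂, ?_, ?_⟩
    · rw [hx, prod_fst_mul, hω]; rfl
    · rw [hx]; rfl
  -- composition at the level of Ofull
  have hcomp : ∀ (α₁ α₂ : List A) (n₁ n₂ : List Ω × ℝ≥0),
      V.Ofull α₁ = some n₁ → (kstar V).Ofull α₂ = some n₂ →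
      (kstar V).Ofull (α₁ ++ α₂) = some (n₁ * n₂) := by
    intro α₁ α₂ n₁ n₂ h₁ h₂
    obtain ⟨p, hr₁, hfin⟩ := (StarAux.V_Ofull_iff hinit hrho1).mp h₁
    have hα₁ne : α₁ ≠ [] := by
      intro h; subst h
      have h' : (V.start, (1 : List Ω × ℝ≥0)) = (p, n₁) := Option.some_inj.mp hr₁
      have hp : V.start = p := congrArg Prod.fst h'
      rw [← hp, hsnf] at hfin
      simp at hfin
    have hk₁ : StarAux.run (kstar V) V.start α₁ = some (V.start, n₁) :=
      StarAux.kstar_run_of_final hnoout hr₁ hfin hα₁ne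
    have hk₂ := StarAux.kstar_Ofull_iff.mp h₂
    apply StarAux.kstar_Ofull_iff.mpr
    rw [StarAux.run_append, hk₁, Option.bind_some, hk₂, Option.map_some]
  -- the key computation, in `ℝ≥0∞`
  have key : ∀ β : List Ω, ∑' α : List A, (condVal (kstar V) β α : ℝ≥0∞) = 1 := by
    intro β
    induction β with
    | nil =>
      have hzero : ∀ α : List A, α ≠ [] → (condVal (kstar V) [] α : ℝ≥0∞) = 0 := by
        intro α hα
        cases hO : (kstar V).Ofull α with
        | none => rw [condVal_of_none hO]; simp
        | some x =>
          obtain ⟨α₁, α₂, ω, n₁, n₂, -, -, -, -, hx1, -⟩ := hdec α x hα hO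
          rw [condVal_of_some hO, if_neg (by rw [hx1]; simp)]
          simp
      rw [tsum_eq_single ([] : List A) hzero, condVal_of_some hOnil]
      have h1 : (1 : List Ω × ℝ≥0).1 = ([] : List Ω) := rfl
      have h2 : (1 : List Ω × ℝ≥0).2 = (1 : ℝ≥0) := rfl
      rw [h1, h2, if_pos rfl, ENNReal.coe_one]
    | cons ω β₂ ih =>
      have hsumV : ∑' α : List A, (condVal V [ω] α : ℝ≥0∞) = 1 := by
        have h1 : ∑' α : List A, condVal V [ω] α = 1 := hcond [ω] (hsing ω)
        have hs : Summable (condVal V [ω]) := by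
          by_contra h
          rw [tsum_eq_zero_of_not_summable h] at h1
          exact zero_ne_one h1
        rw [← ENNReal.coe_tsum hs, h1, ENNReal.coe_one]
      have hbij : ∑' α : List A, (condVal (kstar V) (ω :: β₂) α : ℝ≥0∞) =
          ∑' p : List A × List A,
            ((condVal V [ω] p.1 : ℝ≥0∞) * (condVal (kstar V) β₂ p.2 : ℝ≥0∞)) := by
        apply tsum_eq_tsum_of_ne_zero_bij (fun p => p.1.1 ++ p.1.2)
        · -- injectivity on the support
          rintro ⟨⟨a₁, a₂⟩, hp⟩ ⟨⟨b₁, b₂⟩, hq⟩ h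
          simp only [Function.mem_support, ne_eq, mul_eq_zero, not_or,
            ENNReal.coe_eq_zero] at hp hq
          simp only at h
          obtain ⟨xa, hxa, -, -⟩ := condVal_ne_zero hp.1
          obtain ⟨xb, hxb, -, -⟩ := condVal_ne_zero hq.1
          have heq : a₁ = b₁ := by
            rcases List.append_eq_append_iff.mp h with ⟨a', hc, -⟩ | ⟨c', hac, -⟩
            · have : a' = [] := hpf a₁ a'
                (by rw [hxa]; rfl) (by rw [← hc, hxb]; rfl)
              rw [hc, this, List.append_nil]
            · have : c' = [] := hpf b₁ c'
                (by rw [hxb]; rfl) (by rw [← hac, hxa]; rfl)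
              rw [hac, this, List.append_nil]
          subst heq
          have heq2 : a₂ = b₂ := List.append_cancel_left h
          subst heq2
          rfl
        · -- the support of the LHS is covered
          intro α hα
          simp only [Function.mem_support, ne_eq, ENNReal.coe_eq_zero] at hα
          obtain ⟨x, hO, hx1, hx2⟩ := condVal_ne_zero hα
          have hαne : α ≠ [] := by
            intro h; subst h
            rw [hOnil] at hO
            have hx : x = 1 := (Option.some_inj.mp hO).symm
            rw [hx] at hx1
            have h1 : (1 : List Ω × ℝ≥0).1 = ([] : List Ω) := rfl
            rw [h1] at hx1
            exact List.cons_ne_nil ω β₂ hx1.symm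
          obtain ⟨α₁, α₂, ω', n₁, n₂, hαeq, h₁, hn₁, h₂, hfst, hsnd⟩ := hdec α x hαne hO
          have hcons : ω' :: n₂.1 = ω :: β₂ := by rw [← hfst, hx1]
          have hωeq : ω' = ω ∧ n₂.1 = β₂ := by
            refine ⟨?_, ?_⟩ <;> injection hcons
          have hn₁ω : n₁.1 = [ω] := by rw [hn₁, hωeq.1]
          have hx2ne : x.2 ≠ 0 := by rw [hx2]; exact hα
          rw [hsnd] at hx2ne
          have hn₁2 : n₁.2 ≠ 0 := fun h => hx2ne (by rw [h, zero_mul])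
          have hn₂2 : n₂.2 ≠ 0 := fun h => hx2ne (by rw [h, mul_zero])
          have hc₁ : condVal V [ω] α₁ = n₁.2 := by
            rw [condVal_of_some h₁, if_pos hn₁ω]
          have hc₂ : condVal (kstar V) β₂ α₂ = n₂.2 := by
            rw [condVal_of_some h₂, if_pos hωeq.2]
          refine ⟨⟨(α₁, α₂), ?_⟩, hαeq.symm⟩
          simp only [Function.mem_support, ne_eq, mul_eq_zero, not_or, ENNReal.coe_eq_zero]
          exact ⟨by rw [hc₁]; exact hn₁2, by rw [hc₂]; exact hn₂2⟩
        · -- values agree on the support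
          rintro ⟨⟨a₁, a₂⟩, hp⟩
          simp only [Function.mem_support, ne_eq, mul_eq_zero, not_or,
            ENNReal.coe_eq_zero] at hp
          obtain ⟨x₁, h₁, hx₁1, hx₁2⟩ := condVal_ne_zero hp.1
          obtain ⟨x₂, h₂, hx₂1, hx₂2⟩ := condVal_ne_zero hp.2
          have hcmp := hcomp a₁ a₂ x₁ x₂ h₁ h₂
          simp only
          rw [condVal_of_some hcmp, if_pos (by rw [prod_fst_mul, hx₁1, hx₂1]; rfl),
            prod_snd_mul, ← hx₁2, ← hx₂2, ENNReal.coe_mul]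
      have hinner : ∀ a : List A,
          (∑' b : List A, ((condVal V [ω] a : ℝ≥0∞) * (condVal (kstar V) β₂ b : ℝ≥0∞)))
            = (condVal V [ω] a : ℝ≥0∞) := by
        intro a
        rw [ENNReal.tsum_mul_left, ih, mul_one]
      calc ∑' α : List A, (condVal (kstar V) (ω :: β₂) α : ℝ≥0∞)
          = ∑' p : List A × List A,
              ((condVal V [ω] p.1 : ℝ≥0∞) * (condVal (kstar V) β₂ p.2 : ℝ≥0∞)) := hbij
        _ = ∑' (a : List A) (b : List A),
              ((condVal V [ω] a : ℝ≥0∞) * (condVal (kstar V) β₂ b : ℝ≥0∞)) :=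
            ENNReal.tsum_prod (f := fun a b =>
              ((condVal V [ω] a : ℝ≥0∞) * (condVal (kstar V) β₂ b : ℝ≥0∞)))
        _ = ∑' a : List A, (condVal V [ω] a : ℝ≥0∞) := tsum_congr hinner
        _ = 1 := hsumV
  -- back to `ℝ≥0`
  intro β _
  have h := key β
  have hs : Summable (fun α : List A => condVal (kstar V) β α) :=
    ENNReal.tsum_coe_ne_top_iff_summable.mp (by rw [h]; exact ENNReal.one_ne_top)
  have hcoe := ENNReal.coe_tsum hs
  rw [h] at hcoe
  exact_mod_cast hcoe
end

section
/- Let F be a monotonic failure transducer over Ω and V a transducer satisfying the Kleene-star preconditions with Proj₁(Rng(λ₁)) ⊆ Ω ∪ {ε} and all final outputs of V* having first projection ε. Then the composition V* ∘ F is a monotonic failure transducer. -/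
open scoped NNReal Computability
open Classical

lemma dfStar_nil_inv {A Q M : Type} [Monoid M] (F : FailTransducer A Q M) {q q' : Q} {m : M}
    (h : F.DFStar q [] q' m) : q' = q ∧ m = 1 := by
  cases h; exact ⟨rfl, rfl⟩

lemma dfStarFun_nil {A Q M : Type} [Monoid M] (F : FailTransducer A Q M) (q : Q) :
    F.dfStarFun q [] = some (q, 1) := by
  unfold FailTransducer.dfStarFun
  have h : ∃ x : Q × M, F.DFStar q [] x.1 x.2 := ⟨(q, 1), .nil⟩
  rw [dif_pos h]
  obtain ⟨h1, h2⟩ := dfStar_nil_inv F h.choose_spec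
  congr 1
  exact Prod.ext h1 h2

lemma dfStarFun_single_isSome {A Q M : Type} [Monoid M] (F : FailTransducer A Q M)
    {q : Q} {a : A} (h : (F.toTransducer.delta q a).isSome) :
    (F.dfStarFun q [a]).isSome := by
  obtain ⟨x, hx⟩ := Option.isSome_iff_exists.mp h
  simp only [Transducer.delta, Option.map_eq_some_iff] at hx
  obtain ⟨⟨q2, m⟩, hs, _⟩ := hx
  have hex : ∃ y : Q × M, F.DFStar q [a] y.1 y.2 :=
    ⟨(q2, m * 1), .cons (.base hs) .nil⟩
  unfold FailTransducer.dfStarFun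
  rw [dif_pos hex]
  rfl

/-- the composition `V* ∘ F` of the Kleene star of `V` with a
monotonic failure transducer `F` is monotonic. -/
theorem stmt13 {A Ω Q₁ Q₂ : Type} (V : Transducer A Q₁ (List Ω × ℝ≥0))
    (F : FailTransducer Ω Q₂ ℝ≥0)
    (hpf : ∀ α γ, (V.Ofull α).isSome → (V.Ofull (α ++ γ)).isSome → γ = [])
    (hnoin : ∀ p a, V.delta p a ≠ some V.start)
    (hnoout : ∀ q a, (V.rho q).isSome → V.delta q a = none)
    (hsnf : V.rho V.start = none)
    (hinit : V.init = 1)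
    (hrho1 : ∀ q m, V.rho q = some m → m = 1)
    (hlen : ∀ p a q β o, V.step p a = some (q, (β, o)) → β.length ≤ 1)
    (hnc : F.NoFailCycles) (hmono : F.Monotonic) :
    (comp (kstar V) F).Monotonic := by
  intro q p hfail
  obtain ⟨q1, q2⟩ := q
  simp only [FailTransducer.fail, comp, Option.map_eq_some_iff] at hfail
  obtain ⟨z, ⟨⟨p2, mf⟩, hF, rfl⟩, hp⟩ := hfail
  have hfq : F.fail q2 = some p2 := by
    simp [FailTransducer.fail, hF]
  have hm := hmono q2 p2 hfq
  simp only at hp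
  subst hp
  have hrhoeq : ∀ q2 : Q₂, (comp (kstar V) F).rho (q1, q2) =
      (if q1 = V.start then (some 1 : Option (List Ω × ℝ≥0)) else none).bind
        (fun x => (F.dfStarFun q2 x.1).bind fun y =>
          (F.rho y.1).map fun r => x.2 * y.2 * r) := fun _ => rfl
  constructor
  · -- rho
    intro hrho
    rw [hrhoeq] at hrho ⊢
    by_cases hqs : q1 = V.start
    · rw [if_pos hqs, Option.bind_some] at hrho ⊢
      have h1 : ((1 : List Ω × ℝ≥0)).1 = ([] : List Ω) := rfl
      rw [h1, dfStarFun_nil, Option.bind_some] at hrho ⊢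
      have hs : (F.rho q2).isSome := by
        cases hr : F.rho q2 with
        | none => rw [hr, Option.map_none] at hrho; exact Bool.noConfusion hrho
        | some r => rfl
      obtain ⟨r, hr⟩ := Option.isSome_iff_exists.mp (hm.1 hs)
      rw [hr, Option.map_some]
      rfl
    · rw [if_neg hqs, Option.bind_none] at hrho
      exact Bool.noConfusion hrho
  · -- delta
    intro a hda
    simp only [Transducer.delta, comp, compStep, kstar] at hda ⊢
    cases hsa : V.step q1 a with
    | none => simp [hsa] at hda
    | some x =>
      obtain ⟨q', β, o⟩ := x
      simp only [hsa, Option.map_some, Option.bind_some] at hda ⊢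
      cases hβ : β with
      | nil => subst hβ; simp
      | cons ω rest =>
        have hr0 : rest = [] := by
          have := hlen q1 a q' β o hsa
          rw [hβ] at this; simpa using this
        subst hr0
        subst hβ
        try dsimp only at hda ⊢
        by_cases hd : (F.toTransducer.delta q2 ω).isSome
        · have hd' := hm.2 ω hd
          simp only [Transducer.delta] at hd'
          erw [if_pos hd']
          have hss : (F.toTransducer.delta p2 ω).isSome := hd'
          have := dfStarFun_single_isSome F hss
          obtain ⟨y, hy⟩ := Option.isSome_iff_exists.mp this
          simp [hy]
        · simp only [Transducer.delta] at hd
          erw [if_neg hd] at hda; simp at hda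
end

section
/- In the specialized composition W, for every state ⟨p₁,p₂⟩ with p₁ ∈ Q_ω^r for some ω with δ₂(p₂,ω) defined, if f₄(⟨p₁,p₂⟩) is defined in the generic composition V*∘F, then the sets of input symbols with defined transitions from ⟨p₁,p₂⟩ and from f₄(⟨p₁,p₂⟩) in V*∘F coincide: Sig(⟨p₁,p₂⟩) = Sig(f₄(⟨p₁,p₂⟩)). -/
open scoped NNReal Computability
open Classical

section SpecializedComposition

open scoped NNReal
open Classical

noncomputable section

variable {A Ω Q₁ Q₂ : Type}

/-- Reachability via the generalized transition function. -/
def Reach {Q M : Type} [Monoid M] (V : Transducer A Q M) (p q : Q) : Prop :=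
  ∃ α, V.dstar p α = some q

/-- `Δ_ω`: transitions of `V` whose output word is exactly `ω`. -/
def DeltaOm (V : Transducer A Q₁ (List Ω × ℝ≥0)) (ω : Ω) (p : Q₁) (a : A) (q : Q₁) : Prop :=
  ∃ o, V.step p a = some (q, ([ω], o))

/-- `Q_ω^l`: states from which the source of some `Δ_ω`-transition is reachable. -/
def Ql (V : Transducer A Q₁ (List Ω × ℝ≥0)) (ω : Ω) : Set Q₁ :=
  {l | ∃ p a q, DeltaOm V ω p a q ∧ Reach V l p}

/-- `Q_ω^r`: states reachable from the target of some `Δ_ω`-transition. -/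
def Qr (V : Transducer A Q₁ (List Ω × ℝ≥0)) (ω : Ω) : Set Q₁ :=
  {r | ∃ p a q, DeltaOm V ω p a q ∧ Reach V q r}

/-- `E` maps final states of `V` to the initial state and is the identity elsewhere. -/
def Efun (V : Transducer A Q₁ (List Ω × ℝ≥0)) (p : Q₁) : Q₁ :=
  if (V.rho p).isSome then V.start else p

/-- The transition (and output) relation of the specialized composition `W`
(Definition 18). -/
def WdeltaRel (V : Transducer A Q₁ (List Ω × ℝ≥0)) (F : FailTransducer Ω Q₂ ℝ≥0)
    (s : Q₁ × Q₂) (a : A) (t : (Q₁ × Q₂) × ℝ≥0) : Prop :=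
  (∃ ω q₂, F.delta s.2 ω = some q₂ ∧ s.1 ∈ Ql V ω ∧
    ∃ q₁ o₁, V.step s.1 a = some (q₁, ([], o₁)) ∧ q₁ ∈ Ql V ω ∧ t = ((q₁, s.2), o₁)) ∨
  (∃ ω q₂ q₁ o₁ o₂, F.step s.2 ω = some (q₂, o₂) ∧
    V.step s.1 a = some (q₁, ([ω], o₁)) ∧ t = ((Efun V q₁, q₂), o₁ * o₂)) ∨
  (∃ ω l₂, F.delta l₂ ω = some s.2 ∧ s.1 ∈ Qr V ω ∧
    ∃ q₁ o₁, V.step s.1 a = some (q₁, ([], o₁)) ∧ q₁ ∈ Qr V ω ∧ t = ((Efun V q₁, s.2), o₁))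

/-- The failure transition (and failure output) relation of `W`. -/
def WfailRel (V : Transducer A Q₁ (List Ω × ℝ≥0)) (F : FailTransducer Ω Q₂ ℝ≥0)
    (s : Q₁ × Q₂) (t : (Q₁ × Q₂) × ℝ≥0) : Prop :=
  (∃ ω q₂, F.delta s.2 ω = some q₂ ∧ s.1 ∈ Ql V ω) ∧
  ∃ r₂ mf, F.failStep s.2 = some (r₂, mf) ∧ t = ((s.1, r₂), mf)

/-- The specialized composition `W` of `V*` and `F` (Definition 18). -/
def Wcomp (V : Transducer A Q₁ (List Ω × ℝ≥0)) (F : FailTransducer Ω Q₂ ℝ≥0) :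
    FailTransducer A (Q₁ × Q₂) ℝ≥0 where
  start := (V.start, F.start)
  step := fun s a => if h : ∃ t, WdeltaRel V F s a t then some h.choose else none
  init := F.init
  rho := fun s => if s.1 = V.start then F.rho s.2 else none
  failStep := fun s => if h : ∃ t, WfailRel V F s t then some h.choose else none

/-- The state set of the specialized composition `W`. -/
def WStates (V : Transducer A Q₁ (List Ω × ℝ≥0)) (F : FailTransducer Ω Q₂ ℝ≥0) :
    Set (Q₁ × Q₂) :=
  {s | ∃ p₂ ω q₂, F.delta p₂ ω = some q₂ ∧
    ((s.2 = p₂ ∧ s.1 ∈ Ql V ω) ∨ (s.2 = q₂ ∧ ∃ r ∈ Qr V ω, s.1 = Efun V r))}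

end
end SpecializedComposition

section Aux

open Classical

variable {A Ω Q₁ Q₂ : Type}

lemma list_mul_eq_append {Ω : Type} (x y : List Ω) : x * y = x ++ y := rfl

lemma list_one_eq_nil {Ω : Type} : (1 : List Ω) = [] := rfl

namespace Transducer

variable {Q M : Type} [Monoid M]

lemma exists_lstar (V : Transducer A Q M) :
    ∀ (α : List A) (q q' : Q), V.dstar q α = some q' → ∃ m, V.lstar q α = some m := by
  intro α
  induction α with
  | nil => intro q q' _; exact ⟨1, rfl⟩
  | cons a w ih =>
    intro q q' h
    simp only [dstar, delta, Option.bind_eq_some_iff, Option.map_eq_some_iff] at h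
    obtain ⟨q₁, ⟨x, hx, hx1⟩, hd⟩ := h
    obtain ⟨m, hm⟩ := ih x.1 q' (hx1 ▸ hd)
    exact ⟨x.2 * m, by simp [lstar, hx, hm]⟩

lemma dstar_lstar_append (V : Transducer A Q M) :
    ∀ (α : List A) (q q' : Q) (m : M), V.dstar q α = some q' → V.lstar q α = some m →
    ∀ (β : List A) (q'' : Q) (m' : M), V.dstar q' β = some q'' → V.lstar q' β = some m' →
    V.dstar q (α ++ β) = some q'' ∧ V.lstar q (α ++ β) = some (m * m') := by
  intro α
  induction α with
  | nil =>
    intro q q' m hd hl β q'' m' hd' hl'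
    simp only [dstar] at hd
    simp only [lstar] at hl
    obtain rfl : q = q' := by injection hd
    obtain rfl : (1 : M) = m := by injection hl
    simpa [one_mul] using ⟨hd', hl'⟩
  | cons a w ih =>
    intro q q' m hd hl β q'' m' hd' hl'
    simp only [dstar, delta, Option.bind_eq_some_iff, Option.map_eq_some_iff] at hd
    obtain ⟨q₁, ⟨x, hx, hx1⟩, hdw⟩ := hd
    simp only [lstar, hx, Option.bind_some, Option.map_eq_some_iff] at hl
    obtain ⟨m₁, hm₁, rfl⟩ := hl
    obtain ⟨HD, HL⟩ := ih x.1 q' m₁ (hx1 ▸ hdw) hm₁ β q'' m' hd' hl'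
    constructor
    · simp [dstar, delta, hx, HD]
    · simp [lstar, hx, HL, mul_assoc]

lemma dstar_lstar_single (V : Transducer A Q M) {q : Q} {a : A} {x : Q × M}
    (hx : V.step q a = some x) :
    V.dstar q [a] = some x.1 ∧ V.lstar q [a] = some x.2 := by
  constructor
  · simp [dstar, delta, hx]
  · simp [lstar, hx]

end Transducer

open Transducer in
/-- Key lemma: from a state in `Q_ω^r`, every outgoing `V`-transition has output
word `ε`. -/
lemma qr_step_nil (V : Transducer A Q₁ (List Ω × ℝ≥0))
    (hinit : V.init = 1)
    (hrho1 : ∀ q m, V.rho q = some m → m = 1)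
    (hrange : {β | ∃ α x, V.Ofull α = some x ∧ x.1 = β} = {β | ∃ ω : Ω, β = [ω]})
    (htrim : ∀ q : Q₁, (∃ α, V.dstar V.start α = some q) ∧ ∃ α, (V.O q α).isSome)
    {ω : Ω} {p₁ : Q₁} (hp₁ : p₁ ∈ Qr V ω)
    {a : A} {q₁ : Q₁} {β : List Ω} {o : ℝ≥0}
    (hstep : V.step p₁ a = some (q₁, (β, o))) : β = [] := by
  obtain ⟨p, a₀, q, ⟨o₀, hΔ⟩, α₁, hreach⟩ := hp₁
  -- p reachable from start
  obtain ⟨⟨α₀, hα₀⟩, -⟩ := htrim p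
  obtain ⟨m₀, hm₀⟩ := V.exists_lstar α₀ V.start p hα₀
  obtain ⟨m₁, hm₁⟩ := V.exists_lstar α₁ q p₁ hreach
  -- q₁ co-accessible
  obtain ⟨-, α₂, hO⟩ := htrim q₁
  rw [Transducer.O] at hO
  cases hd2 : V.dstar q₁ α₂ with
  | none => rw [hd2] at hO; simp at hO
  | some f =>
  rw [hd2] at hO
  cases hl2 : V.lstar q₁ α₂ with
  | none => rw [hl2] at hO; simp at hO
  | some m₂ =>
  rw [hl2] at hO
  cases hr : V.rho f with
  | none => simp [hr] at hO
  | some r =>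
  -- build the full path
  have s1 := V.dstar_lstar_single hΔ
  have s2 := V.dstar_lstar_single hstep
  have seg45 := V.dstar_lstar_append [a] p₁ q₁ (β, o) s2.1 s2.2 α₂ f m₂ hd2 hl2
  have seg345 := V.dstar_lstar_append α₁ q p₁ m₁ hreach hm₁ ([a] ++ α₂) f ((β, o) * m₂)
    seg45.1 seg45.2
  have seg2345 := V.dstar_lstar_append [a₀] p q ([ω], o₀) s1.1 s1.2
    (α₁ ++ ([a] ++ α₂)) f (m₁ * ((β, o) * m₂)) seg345.1 seg345.2
  have segall := V.dstar_lstar_append α₀ V.start p m₀ hα₀ hm₀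
    ([a₀] ++ (α₁ ++ ([a] ++ α₂))) f (([ω], o₀) * (m₁ * ((β, o) * m₂)))
    seg2345.1 seg2345.2
  set w := α₀ ++ ([a₀] ++ (α₁ ++ ([a] ++ α₂))) with hw
  set M : List Ω × ℝ≥0 := m₀ * (([ω], o₀) * (m₁ * ((β, o) * m₂))) with hM
  have hOfull : V.Ofull w = some (V.init * (M * r)) := by
    simp [Transducer.Ofull, Transducer.O, segall.1, segall.2, hr]
  have hmem : (V.init * (M * r)).1 ∈ {β | ∃ α x, V.Ofull α = some x ∧ x.1 = β} :=
    ⟨w, V.init * (M * r), hOfull, rfl⟩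
  rw [hrange] at hmem
  obtain ⟨ω', hω'⟩ := hmem
  have hr1 : r = 1 := hrho1 f r hr
  have hfst : (V.init * (M * r)).1 =
      m₀.1 ++ ([ω] ++ (m₁.1 ++ (β ++ m₂.1))) := by
    rw [hinit, hr1, hM]
    simp only [Prod.fst_mul, Prod.fst_one, list_mul_eq_append, list_one_eq_nil]
    simp
  rw [hfst] at hω'
  have hlen := congrArg List.length hω'
  simp [List.length_append] at hlen
  have hβ0 : β.length = 0 := by omega
  exact List.length_eq_zero_iff.mp hβ0

end Aux
/-- for a state `⟨p₁,p₂⟩` with `p₁ ∈ Q_ω^r` and `δ₂(p₂,ω)` defined,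
if the failure transition of `⟨p₁,p₂⟩` in `V*∘F` is defined then the enabled input
symbols at `⟨p₁,p₂⟩` and at its failure successor coincide. -/
theorem stmt15 {A Ω Q₁ Q₂ : Type} (V : Transducer A Q₁ (List Ω × ℝ≥0))
    (F : FailTransducer Ω Q₂ ℝ≥0)
    (hpf : ∀ α γ, (V.Ofull α).isSome → (V.Ofull (α ++ γ)).isSome → γ = [])
    (hnoin : ∀ p a, V.delta p a ≠ some V.start)
    (hnoout : ∀ q a, (V.rho q).isSome → V.delta q a = none)
    (hsnf : V.rho V.start = none)
    (hinit : V.init = 1)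
    (hrho1 : ∀ q m, V.rho q = some m → m = 1)
    (hrange : {β | ∃ α x, V.Ofull α = some x ∧ x.1 = β} = {β | ∃ ω : Ω, β = [ω]})
    (htrim : ∀ q : Q₁, (∃ α, V.dstar V.start α = some q) ∧ ∃ α, (V.O q α).isSome)
    (hcond : CondProb V)
    (hnc : F.NoFailCycles) (hmono : F.Monotonic) (hprob : F.Probabilistic)
    (hcoacc : ∀ q₂ : Q₂, ∃ α m, F.ORel q₂ α m)
    (p₁ : Q₁) (p₂ r₂ : Q₂) (ω : Ω)
    (hω : (F.delta p₂ ω).isSome) (hp₁ : p₁ ∈ Qr V ω)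
    (hf : F.fail p₂ = some r₂) :
    ∀ a : A, ((comp (kstar V) F).delta (p₁, p₂) a).isSome ↔
      ((comp (kstar V) F).delta (p₁, r₂) a).isSome := by
  intro a
  simp only [Transducer.delta, comp, compStep, kstar, Option.isSome_map]
  cases hV : V.step p₁ a with
  | none => simp [hV]
  | some x =>
    obtain ⟨q₁, β, o⟩ := x
    have hβ : β = [] := qr_step_nil V hinit hrho1 hrange htrim hp₁ hV
    subst hβ
    simp [hV]
end

section
/- Let W be a monotonic probabilistic failure transducer without failure cycles over ⟨ℝ₊,×,1⟩, and for each state q let S(q) := Σ_{α ∈ Dom(O_W^q)} O_W^q(α) (which exists and is positive). Define the pushed transducer W_C with the same states, transitions, and failure transitions, but with λ_C(p,a) := λ(p,a)·S(δ(p,a))/S(p), ι_C := ι·S(s), ρ_C(p) := ρ(p)/S(p), and φ_C(p) := φ(p)·S(f(p))/S(p). Then for every state p and word α with δ_f*(p,α) defined, λ_{C,f}*(p,α) = λ_f*(p,α)·S(δ_f*(p,α))/S(p); consequently O_{W_C} = O_W. -/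
open scoped NNReal Computability
open Classical

/-- weight pushing: the pushed transducer `W_C` satisfies
`λ_{C,f}*(p,α) = λ_f*(p,α)·S(δ_f*(p,α))/S(p)` and represents the same function as
`W`. -/
theorem stmt17 {A Q : Type} [Fintype A] [Fintype Q]
    (W WC : FailTransducer A Q ℝ≥0)
    (hmono : W.Monotonic) (hprob : W.Probabilistic) (hnc : W.NoFailCycles)
    (Sv : Q → ℝ≥0)
    (hS : ∀ q, Sv q = ∑' α : List A, ((W.Ofun q α).getD 0))
    (hSpos : ∀ q, 0 < Sv q)
    (hstep : ∀ p a, WC.step p a = (W.step p a).map fun x => (x.1, x.2 * Sv x.1 / Sv p))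
    (hfailStep : ∀ p, WC.failStep p = (W.failStep p).map fun x => (x.1, x.2 * Sv x.1 / Sv p))
    (hrho : ∀ p, WC.rho p = (W.rho p).map fun r => r / Sv p)
    (hinit : WC.init = W.init * Sv W.start)
    (hstart : WC.start = W.start) :
    (∀ p (α : List A) q m, W.DFStar p α q m → WC.DFStar p α q (m * Sv q / Sv p)) ∧
    (∀ α m, WC.OFullRel α m ↔ W.OFullRel α m) := by
  have hne : ∀ q, Sv q ≠ 0 := fun q => (hSpos q).ne'
  have fwdDF : ∀ p a q m, W.DF p a q m → WC.DF p a q (m * Sv q / Sv p) := by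
    intro p a q m h
    induction h with
    | @base q a q' m h =>
        exact FailTransducer.DF.base (by rw [hstep, h]; rfl)
    | @fail q a p mf q' m h1 h2 _ ih =>
        have key := FailTransducer.DF.fail
          (show WC.step q a = none by rw [hstep, h1]; rfl)
          (show WC.failStep q = some (p, mf * Sv p / Sv q) by rw [hfailStep, h2]; rfl) ih
        have heq : (mf * Sv p / Sv q) * (m * Sv q' / Sv p) = mf * m * Sv q' / Sv q := by
          field_simp
          first
          | rw [div_eq_div_iff (mul_ne_zero (hne _) (hne _)) (hne _)]
          | rw [div_eq_div_iff (hne _) (mul_ne_zero (hne _) (hne _))]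
          | rw [div_eq_iff (mul_ne_zero (hne _) (hne _))]
          | rw [eq_div_iff (mul_ne_zero (hne _) (hne _))]
          ring
        rwa [heq] at key
  have bwdDF : ∀ p a q m', WC.DF p a q m' →
      ∃ m, W.DF p a q m ∧ m' = m * Sv q / Sv p := by
    intro p a q m' h
    induction h with
    | @base q a q' m h =>
        rw [hstep] at h
        rcases Option.map_eq_some_iff.mp h with ⟨x, hx, hx2⟩
        refine ⟨x.2, FailTransducer.DF.base ?_, ?_⟩
        · rw [hx]
          cases x
          cases hx2
          rfl
        · cases x; cases hx2; rfl
    | @fail q a p mf q' m h1 h2 _ ih =>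
        rw [hstep] at h1
        rw [hfailStep] at h2
        rcases Option.map_eq_some_iff.mp h2 with ⟨y, hy, hy2⟩
        rcases ih with ⟨m0, hm0, rfl⟩
        have h1' : W.step q a = none := by
          cases hw : W.step q a with
          | none => rfl
          | some v => rw [hw] at h1; simp at h1
        obtain ⟨hy1, hy2'⟩ : y.1 = p ∧ y.2 * Sv y.1 / Sv q = mf := by
          constructor <;> (cases hy2; rfl)
        subst hy1
        refine ⟨y.2 * m0, FailTransducer.DF.fail h1' (by rw [hy]) hm0, ?_⟩
        rw [← hy2']
        field_simp
        first
        | rw [div_eq_div_iff (mul_ne_zero (hne _) (hne _)) (hne _)]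
        | rw [div_eq_div_iff (hne _) (mul_ne_zero (hne _) (hne _))]
        | rw [div_eq_iff (mul_ne_zero (hne _) (hne _))]
        | rw [eq_div_iff (mul_ne_zero (hne _) (hne _))]
        ring
  have fwdStar : ∀ p (α : List A) q m, W.DFStar p α q m →
      WC.DFStar p α q (m * Sv q / Sv p) := by
    intro p α q m h
    induction h with
    | @nil q =>
        have : (1 : ℝ≥0) * Sv q / Sv q = 1 := by
          rw [one_mul, div_self (hne q)]
        rw [this]
        exact FailTransducer.DFStar.nil
    | @cons q a w q' m q'' m' h1 _ ih =>
        have key := FailTransducer.DFStar.cons (fwdDF _ _ _ _ h1) ih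
        have heq : (m * Sv q' / Sv q) * (m' * Sv q'' / Sv q') = m * m' * Sv q'' / Sv q := by
          field_simp
          first
          | rw [div_eq_div_iff (mul_ne_zero (hne _) (hne _)) (hne _)]
          | rw [div_eq_div_iff (hne _) (mul_ne_zero (hne _) (hne _))]
          | rw [div_eq_iff (mul_ne_zero (hne _) (hne _))]
          | rw [eq_div_iff (mul_ne_zero (hne _) (hne _))]
          ring
        rwa [heq] at key
  have bwdStar : ∀ p (α : List A) q m', WC.DFStar p α q m' →
      ∃ m, W.DFStar p α q m ∧ m' = m * Sv q / Sv p := by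
    intro p α q m' h
    induction h with
    | @nil q =>
        exact ⟨1, FailTransducer.DFStar.nil, by rw [one_mul, div_self (hne q)]⟩
    | @cons q a w q' m q'' m' h1 _ ih =>
        rcases bwdDF _ _ _ _ h1 with ⟨m0, hm0, rfl⟩
        rcases ih with ⟨m1, hm1, rfl⟩
        refine ⟨m0 * m1, FailTransducer.DFStar.cons hm0 hm1, ?_⟩
        field_simp
        first
        | rw [div_eq_div_iff (mul_ne_zero (hne _) (hne _)) (hne _)]
        | rw [div_eq_div_iff (hne _) (mul_ne_zero (hne _) (hne _))]
        | rw [div_eq_iff (mul_ne_zero (hne _) (hne _))]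
        | rw [eq_div_iff (mul_ne_zero (hne _) (hne _))]
        ring
  refine ⟨fwdStar, fun α m => ⟨?_, ?_⟩⟩
  · rintro ⟨m', ⟨p, mstar, r, hdf, hrhop, rfl⟩, rfl⟩
    rw [hstart] at hdf
    rcases bwdStar _ _ _ _ hdf with ⟨m0, hm0, rfl⟩
    rw [hrho] at hrhop
    rcases Option.map_eq_some_iff.mp hrhop with ⟨r0, hr0, rfl⟩
    refine ⟨m0 * r0, ⟨p, m0, r0, hm0, hr0, rfl⟩, ?_⟩
    rw [hinit]
    field_simp
    first
    | rw [div_eq_div_iff (mul_ne_zero (hne _) (hne _)) (hne _)]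
    | rw [div_eq_div_iff (hne _) (mul_ne_zero (hne _) (hne _))]
    | rw [div_eq_iff (mul_ne_zero (hne _) (hne _))]
    | rw [eq_div_iff (mul_ne_zero (hne _) (hne _))]
    ring
  · rintro ⟨m', ⟨p, mstar, r, hdf, hrhop, rfl⟩, rfl⟩
    refine ⟨(mstar * Sv p / Sv W.start) * (r / Sv p),
      ⟨p, mstar * Sv p / Sv W.start, r / Sv p, ?_, ?_, rfl⟩, ?_⟩
    · rw [hstart]; exact fwdStar _ _ _ _ hdf
    · rw [hrho, hrhop]; rfl
    · rw [hinit]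
      field_simp
      first
      | rw [div_eq_div_iff (mul_ne_zero (hne _) (hne _)) (hne _)]
      | rw [div_eq_div_iff (hne _) (mul_ne_zero (hne _) (hne _))]
      | rw [div_eq_iff (mul_ne_zero (hne _) (hne _))]
      | rw [eq_div_iff (mul_ne_zero (hne _) (hne _))]
      ring
end

section
/- With W and the pushed transducer W_C as above (weights pushed using the sums S(q) in the semiring ⟨ℝ₊,⊕,×,0,1⟩), W_C is canonical with respect to that semiring: for every state p, ⊕_{α ∈ Dom(O_{W_C}^p)} O_{W_C}^p(α) = 1. -/
open scoped NNReal Computability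
open Classical

section Aux

open FailTransducer

variable {A Q M : Type} [Monoid M]

theorem DF_unique {T : FailTransducer A Q M} {q : Q} {a : A} {q1 : Q} {m1 : M}
    (h1 : DF T q a q1 m1) : ∀ {q2 m2}, DF T q a q2 m2 → q1 = q2 ∧ m1 = m2 := by
  induction h1 with
  | base h =>
    intro q2 m2 h2
    cases h2 with
    | base h' => rw [h] at h'; exact ⟨(Prod.mk.injEq _ _ _ _ ▸ Option.some.inj h').1,
        (Prod.mk.injEq _ _ _ _ ▸ Option.some.inj h').2⟩
    | fail hn _ _ => rw [h] at hn; exact absurd hn (Option.some_ne_none _)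
  | fail hn hf _ ih =>
    intro q2 m2 h2
    cases h2 with
    | base h' => rw [h'] at hn; exact absurd hn (Option.some_ne_none _)
    | fail hn' hf' hd' =>
      rw [hf] at hf'
      obtain ⟨h1, h2⟩ := Prod.mk.injEq _ _ _ _ ▸ Option.some.inj hf'
      subst h1; subst h2
      obtain ⟨e1, e2⟩ := ih hd'
      exact ⟨e1, by rw [e2]⟩

theorem DFStar_unique {T : FailTransducer A Q M} {q : Q} {α : List A} {q1 : Q} {m1 : M}
    (h1 : DFStar T q α q1 m1) : ∀ {q2 m2}, DFStar T q α q2 m2 → q1 = q2 ∧ m1 = m2 := by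
  induction h1 with
  | nil =>
    intro q2 m2 h2
    cases h2 with
    | nil => exact ⟨rfl, rfl⟩
  | cons hd _ ih =>
    intro q2 m2 h2
    cases h2 with
    | cons hd' ht' =>
      obtain ⟨e1, e2⟩ := DF_unique hd hd'
      subst e1; subst e2
      obtain ⟨f1, f2⟩ := ih ht'
      exact ⟨f1, by rw [f2]⟩

theorem ORel_unique {T : FailTransducer A Q M} {q : Q} {α : List A} {m1 m2 : M}
    (h1 : T.ORel q α m1) (h2 : T.ORel q α m2) : m1 = m2 := by
  obtain ⟨p, m', r, hd, hr, he⟩ := h1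
  obtain ⟨p2, m2', r2, hd2, hr2, he2⟩ := h2
  obtain ⟨e1, e2⟩ := DFStar_unique hd hd2
  subst e1; subst e2
  rw [hr] at hr2
  rw [he, he2, Option.some.inj hr2]

theorem Ofun_getD_of_ORel {T : FailTransducer A Q M} {q : Q} {α : List A} {m : M}
    (h : T.ORel q α m) : T.Ofun q α = some m := by
  rw [FailTransducer.Ofun, dif_pos ⟨m, h⟩]
  exact congrArg some (ORel_unique (⟨m, h⟩ : ∃ m, T.ORel q α m).choose_spec h)

theorem Ofun_eq_none {T : FailTransducer A Q M} {q : Q} {α : List A}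
    (h : ¬ ∃ m, T.ORel q α m) : T.Ofun q α = none := by
  rw [FailTransducer.Ofun, dif_neg h]

end Aux

section Push

open FailTransducer

variable {A Q : Type} {W WC : FailTransducer A Q ℝ≥0} {Sv : Q → ℝ≥0}

theorem push_arith {x y b c d : ℝ≥0} (hb : b ≠ 0) :
    (x * b / c) * (y * d / b) = x * y * d / c := by
  rw [div_mul_div_comm, show (x * b) * (y * d) = (x * y * d) * b by ring,
    mul_div_mul_right _ _ hb]

theorem push_arith2 {x y b c : ℝ≥0} (hb : b ≠ 0) :
    (x * b / c) * (y / b) = x * y / c := by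
  rw [div_mul_div_comm, show (x * b) * y = (x * y) * b by ring,
    mul_div_mul_right _ _ hb]

theorem DF_push (hSpos : ∀ q, Sv q ≠ 0)
    (hstep : ∀ p a, WC.step p a = (W.step p a).map fun x => (x.1, x.2 * Sv x.1 / Sv p))
    (hfailStep : ∀ p, WC.failStep p = (W.failStep p).map fun x => (x.1, x.2 * Sv x.1 / Sv p))
    {q : Q} {a : A} {q' : Q} {m : ℝ≥0} :
    DF WC q a q' m ↔ ∃ m0, DF W q a q' m0 ∧ m = m0 * Sv q' / Sv q := by
  constructor
  · intro h
    induction h with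
    | @base q a q' m h =>
      rw [hstep] at h
      obtain ⟨⟨q0, m0⟩, hw, he⟩ := Option.map_eq_some_iff.1 h
      obtain ⟨e1, e2⟩ := Prod.mk.injEq _ _ _ _ ▸ he
      subst e1
      exact ⟨m0, DF.base hw, e2.symm⟩
    | @fail q a p mf q' m hn hf _ ih =>
      rw [hstep] at hn
      rw [hfailStep] at hf
      obtain ⟨⟨p0, mf0⟩, hw, he⟩ := Option.map_eq_some_iff.1 hf
      obtain ⟨e1, e2⟩ := Prod.mk.injEq _ _ _ _ ▸ he
      subst e1
      obtain ⟨m0, hd0, hm0⟩ := ih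
      refine ⟨mf0 * m0, DF.fail (Option.map_eq_none_iff.1 hn) hw hd0, ?_⟩
      dsimp only at e2 hm0
      rw [← e2, hm0]
      exact push_arith (hSpos p0)
  · rintro ⟨m0, h, rfl⟩
    induction h with
    | @base q a q' m h =>
      exact DF.base (by rw [hstep, h]; rfl)
    | @fail q a p mf q' m hn hf _ ih =>
      have := DF.fail (q := q) (a := a)
        (show WC.step q a = none by rw [hstep, hn]; rfl)
        (show WC.failStep q = some (p, mf * Sv p / Sv q) by rw [hfailStep, hf]; rfl) ih
      have harith : (mf * Sv p / Sv q) * (m * Sv q' / Sv p) = mf * m * Sv q' / Sv q :=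
        push_arith (hSpos p)
      rwa [harith] at this

theorem DFStar_push (hSpos : ∀ q, Sv q ≠ 0)
    (hstep : ∀ p a, WC.step p a = (W.step p a).map fun x => (x.1, x.2 * Sv x.1 / Sv p))
    (hfailStep : ∀ p, WC.failStep p = (W.failStep p).map fun x => (x.1, x.2 * Sv x.1 / Sv p))
    {q : Q} {α : List A} {q' : Q} {m : ℝ≥0} :
    DFStar WC q α q' m ↔ ∃ m0, DFStar W q α q' m0 ∧ m = m0 * Sv q' / Sv q := by
  constructor
  · intro h
    induction h with
    | @nil q => exact ⟨1, DFStar.nil, by rw [one_mul, div_self (hSpos q)]⟩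
    | @cons q a w q1 m1 q' m2 hd _ ih =>
      obtain ⟨n1, hdw, e1⟩ := (DF_push hSpos hstep hfailStep).1 hd
      obtain ⟨n2, htw, e2⟩ := ih
      refine ⟨n1 * n2, DFStar.cons hdw htw, ?_⟩
      rw [e1, e2]
      exact push_arith (hSpos q1)
  · rintro ⟨m0, h, rfl⟩
    induction h with
    | @nil q => rw [one_mul, div_self (hSpos q)]; exact DFStar.nil
    | @cons q a w q1 m1 q' m2 hd _ ih =>
      have hdc : DF WC q a q1 (m1 * Sv q1 / Sv q) :=
        (DF_push hSpos hstep hfailStep).2 ⟨m1, hd, rfl⟩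
      have := DFStar.cons hdc ih
      have harith : (m1 * Sv q1 / Sv q) * (m2 * Sv q' / Sv q1) = m1 * m2 * Sv q' / Sv q :=
        push_arith (hSpos q1)
      rwa [harith] at this

theorem ORel_push (hSpos : ∀ q, Sv q ≠ 0)
    (hstep : ∀ p a, WC.step p a = (W.step p a).map fun x => (x.1, x.2 * Sv x.1 / Sv p))
    (hfailStep : ∀ p, WC.failStep p = (W.failStep p).map fun x => (x.1, x.2 * Sv x.1 / Sv p))
    (hrho : ∀ p, WC.rho p = (W.rho p).map fun r => r / Sv p)
    {q : Q} {α : List A} {m : ℝ≥0} :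
    WC.ORel q α m ↔ ∃ m0, W.ORel q α m0 ∧ m = m0 / Sv q := by
  constructor
  · rintro ⟨p, m', r, hd, hr, rfl⟩
    obtain ⟨m0, hd0, e0⟩ := (DFStar_push hSpos hstep hfailStep).1 hd
    rw [hrho] at hr
    obtain ⟨r0, hr0, er⟩ := Option.map_eq_some_iff.1 hr
    refine ⟨m0 * r0, ⟨p, m0, r0, hd0, hr0, rfl⟩, ?_⟩
    rw [e0, ← er]
    exact push_arith2 (hSpos p)
  · rintro ⟨m0, ⟨p, m', r, hd, hr, rfl⟩, rfl⟩
    refine ⟨p, m' * Sv p / Sv q, r / Sv p,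
      (DFStar_push hSpos hstep hfailStep).2 ⟨m', hd, rfl⟩,
      by rw [hrho, hr]; rfl, ?_⟩
    exact (push_arith2 (hSpos p)).symm

end Push

/-- the pushed transducer `W_C` is canonical: at every state the
outputs sum to `1`. -/
theorem stmt18 {A Q : Type} [Fintype A] [Fintype Q]
    (W WC : FailTransducer A Q ℝ≥0)
    (hmono : W.Monotonic) (hprob : W.Probabilistic) (hnc : W.NoFailCycles)
    (Sv : Q → ℝ≥0)
    (hS : ∀ q, Sv q = ∑' α : List A, ((W.Ofun q α).getD 0))
    (hSpos : ∀ q, 0 < Sv q)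
    (hstep : ∀ p a, WC.step p a = (W.step p a).map fun x => (x.1, x.2 * Sv x.1 / Sv p))
    (hfailStep : ∀ p, WC.failStep p = (W.failStep p).map fun x => (x.1, x.2 * Sv x.1 / Sv p))
    (hrho : ∀ p, WC.rho p = (W.rho p).map fun r => r / Sv p)
    (hinit : WC.init = W.init * Sv W.start)
    (hstart : WC.start = W.start) :
    ∀ p : Q, ∑' α : List A, ((WC.Ofun p α).getD 0) = 1 := by
  intro p
  have hSne : ∀ q, Sv q ≠ 0 := fun q => (hSpos q).ne'
  have hpt : ∀ α : List A, ((WC.Ofun p α).getD 0) = ((W.Ofun p α).getD 0) * (Sv p)⁻¹ := by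
    intro α
    by_cases h : ∃ m, W.ORel p α m
    · obtain ⟨m, hm⟩ := h
      have h1 : WC.Ofun p α = some (m / Sv p) :=
        Ofun_getD_of_ORel ((ORel_push hSne hstep hfailStep hrho).2 ⟨m, hm, rfl⟩)
      rw [h1, Ofun_getD_of_ORel hm, Option.getD_some, Option.getD_some, div_eq_mul_inv]
    · have h1 : ¬ ∃ m, WC.ORel p α m := by
        rintro ⟨m, hm⟩
        obtain ⟨m0, hm0, _⟩ := (ORel_push hSne hstep hfailStep hrho).1 hm
        exact h ⟨m0, hm0⟩
      rw [Ofun_eq_none h, Ofun_eq_none h1, Option.getD_none, zero_mul]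
  calc ∑' α : List A, ((WC.Ofun p α).getD 0)
      = ∑' α : List A, ((W.Ofun p α).getD 0) * (Sv p)⁻¹ := tsum_congr hpt
    _ = (∑' α : List A, ((W.Ofun p α).getD 0)) * (Sv p)⁻¹ := NNReal.tsum_mul_right _ _
    _ = Sv p * (Sv p)⁻¹ := by rw [← hS]
    _ = 1 := mul_inv_cancel₀ (hSne p)
end
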